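/- arXiv:1912.03342 — 5 statements merged into one kernel-verified Lean document; each statement's English description precedes it below -/
import Mathlib

section
/- Let κ be a regular uncountable cardinal, let ⟨C_β : β < κ⟩ be a C-sequence over κ, let χ be a cardinal with χ < sup(reg(κ)), let A, Δ', Γ ∈ [κ]^κ, and let b' : A → [Γ]^{≤χ} be a function satisfying Δ' ∩ α ⊆ ⋃_{β ∈ b'(α)} C_β for all α ∈ A. Then for every stationary Σ ⊆ E^κ_{>χ} there exist Δ₀, Δ₁ ∈ [κ]^κ and a progressive function b : κ → [Γ]^{≤χ} such that: Δ₀ ⊆ Δ'; acc⁺(Δ₁) ∩ E^κ_{>χ} ⊆ Δ₁; Δ₀ ∩ α ⊆ ⋃_{β ∈ b(α)} C_β for all α < κ; Δ₁ ∩ α ⊆ ⋃_{β ∈ b(α)} acc(C_β) for all α < κ; and the set {α ∈ Σ : for all β ∈ b(α), sup(C_β ∩ α) = α} is stationary in κ. -/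
noncomputable section

open Set

namespace CSeq

/-- `#s = c`, phrased with a universe lift (sets of ordinals live in `Type 1`). -/
def MkEq {α : Type 1} (s : Set α) (c : Cardinal.{0}) : Prop :=
  Cardinal.mk s = Cardinal.lift.{1} c

def MkLe {α : Type 1} (s : Set α) (c : Cardinal.{0}) : Prop :=
  Cardinal.mk s ≤ Cardinal.lift.{1} c

def MkLt {α : Type 1} (s : Set α) (c : Cardinal.{0}) : Prop :=
  Cardinal.mk s < Cardinal.lift.{1} c

/-- The strict supremum `ssup(a)` of a set of ordinals. -/
def ssup (a : Set Ordinal.{0}) : Ordinal.{0} := sSup ((· + 1) '' a)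

/-- `acc⁺(a) = {α < ssup a | sup (a ∩ α) = α > 0}`. -/
def accPlus (a : Set Ordinal.{0}) : Set Ordinal.{0} :=
  {α | α < ssup a ∧ 0 < α ∧ sSup (a ∩ Iio α) = α}

/-- `acc(a) = a ∩ acc⁺(a)`. -/
def acc (a : Set Ordinal.{0}) : Set Ordinal.{0} := a ∩ accPlus a

/-- A set of ordinals is closed below `β`. -/
def IsClosedIn (C : Set Ordinal.{0}) (β : Ordinal.{0}) : Prop :=
  ∀ α, α < β → 0 < α → sSup (C ∩ Iio α) = α → α ∈ C

/-- A club (closed and unbounded set) in `β`. -/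
def IsClubIn (C : Set Ordinal.{0}) (β : Ordinal.{0}) : Prop :=
  C ⊆ Iio β ∧ (∀ α < β, ∃ γ ∈ C, α ≤ γ) ∧ IsClosedIn C β

/-- A stationary subset of `β`: one meeting every club in `β`. -/
def IsStationaryIn (S : Set Ordinal.{0}) (β : Ordinal.{0}) : Prop :=
  ∀ C, IsClubIn C β → (S ∩ C).Nonempty

/-- A C-sequence over a set `Γ` of ordinals. -/
def IsCSeqOn (Γ : Set Ordinal.{0}) (C : Ordinal.{0} → Set Ordinal.{0}) : Prop :=
  ∀ β ∈ Γ, C β ⊆ Iio β ∧ IsClosedIn (C β) β ∧ sSup (C β) = sSup (Iio β)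

/-- A C-sequence over `κ`. -/
def IsCSeq (κ : Ordinal.{0}) (C : Ordinal.{0} → Set Ordinal.{0}) : Prop :=
  IsCSeqOn (Iio κ) C

/-- The covering relation underlying the C-sequence number: there are `Δ ∈ [κ]^κ` and
`b : κ → [Γ]^χ` with `Δ ∩ α ⊆ ⋃_{β ∈ b α} C β` for all `α < κ`. -/
def CSeqCovers (κ : Cardinal.{0}) (Γ : Set Ordinal.{0})
    (C : Ordinal.{0} → Set Ordinal.{0}) (χ : Cardinal.{0}) : Prop :=
  ∃ (Δ : Set Ordinal.{0}) (b : Ordinal.{0} → Set Ordinal.{0}),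
    Δ ⊆ Iio κ.ord ∧ MkEq Δ κ ∧
    (∀ α < κ.ord, b α ⊆ Γ ∧ MkEq (b α) χ) ∧
    ∀ α < κ.ord, Δ ∩ Iio α ⊆ ⋃ β ∈ b α, C β

/-- `χ(vec C)` for a C-sequence over `Γ ⊆ κ`. -/
def chiOfOn (κ : Cardinal.{0}) (Γ : Set Ordinal.{0})
    (C : Ordinal.{0} → Set Ordinal.{0}) : Cardinal.{0} :=
  sInf {χ : Cardinal.{0} | χ ≤ κ ∧ CSeqCovers κ Γ C χ}

/-- `χ(vec C)` for a C-sequence over `κ`. -/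
def chiOf (κ : Cardinal.{0}) (C : Ordinal.{0} → Set Ordinal.{0}) : Cardinal.{0} :=
  chiOfOn κ (Iio κ.ord) C

/-- The C-sequence number `χ(κ)`. -/
def chiNum (κ : Cardinal.{0}) : Cardinal.{0} :=
  sInf {χ : Cardinal.{0} | χ ≤ κ ∧ ∀ C, IsCSeq κ.ord C → CSeqCovers κ (Iio κ.ord) C χ}

/-- The C-sequence spectrum of `κ`: the infinite values of `χ(vec C)`. -/
def spec (κ : Cardinal.{0}) : Set Cardinal.{0} :=
  {χ | Cardinal.aleph0 ≤ χ ∧ ∃ C, IsCSeq κ.ord C ∧ chiOf κ C = χ}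

/-- `sup (reg κ)`, the supremum of the infinite regular cardinals below `κ`. -/
def supReg (κ : Cardinal.{0}) : Cardinal.{0} :=
  sSup {ν : Cardinal.{0} | ν.IsRegular ∧ ν < κ}

/-- `acc(κ)`: the set of nonzero limit ordinals below `κ`. -/
def accOrd (κ : Ordinal.{0}) : Set Ordinal.{0} := {β | β < κ ∧ Order.IsSuccLimit β}

/-- `Tr(S)`: the set of `β < κ` of uncountable cofinality in which `S` reflects. -/
def TrSet (κ : Ordinal.{0}) (S : Set Ordinal.{0}) : Set Ordinal.{0} :=
  {β | β < κ ∧ Cardinal.aleph0 < β.cof ∧ IsStationaryIn (S ∩ Iio β) β}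

/-- The order type of a set of ordinals (as an ordinal one universe up). -/
def otp (s : Set Ordinal.{0}) : Ordinal.{1} :=
  Ordinal.type (Subrel ((· < ·) : Ordinal.{0} → Ordinal.{0} → Prop) (· ∈ s))

/-- `D^c_{≤ i}(β) = {α < β | c(α, β) ≤ i}`. -/
def DleI (c : Ordinal.{0} → Ordinal.{0} → Ordinal.{0}) (i β : Ordinal.{0}) :
    Set Ordinal.{0} :=
  {α | α < β ∧ c α β ≤ i}

/-- The coloring `c` takes pairs from `κ` to colors `< θ`. -/
def ColoringInto (κ θ : Ordinal.{0}) (c : Ordinal.{0} → Ordinal.{0} → Ordinal.{0}) : Prop :=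
  ∀ α β, α < β → β < κ → c α β < θ

/-- `S`-closedness of a coloring. -/
def IsClosedColoringOn (S : Set Ordinal.{0}) (κ θ : Ordinal.{0})
    (c : Ordinal.{0} → Ordinal.{0} → Ordinal.{0}) : Prop :=
  ∀ β < κ, ∀ i < θ, ∀ α ∈ S, α < β → 0 < α →
    sSup (DleI c i β ∩ Iio α) = α → α ∈ DleI c i β

/-- Closedness of a coloring. -/
def IsClosedColoring (κ θ : Ordinal.{0})
    (c : Ordinal.{0} → Ordinal.{0} → Ordinal.{0}) : Prop :=
  ∀ β < κ, ∀ i < θ, ∀ α, α < β → 0 < α →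
    sSup (DleI c i β ∩ Iio α) = α → α ∈ DleI c i β

/-- `c` witnesses `U(κ, μ, θ, χ)`. -/
def WitnessU (κ μ θ χ : Cardinal.{0})
    (c : Ordinal.{0} → Ordinal.{0} → Ordinal.{0}) : Prop :=
  ∀ χ' : Cardinal.{0}, χ' < χ →
    ∀ 𝒜 : Set (Set Ordinal.{0}),
      (∀ a ∈ 𝒜, a ⊆ Iio κ.ord ∧ MkEq a χ') → MkEq 𝒜 κ → 𝒜.Pairwise Disjoint →
    ∀ i, i < θ.ord →
      ∃ ℬ ⊆ 𝒜, MkEq ℬ μ ∧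
        ∀ a ∈ ℬ, ∀ b ∈ ℬ, (∀ α ∈ a, ∀ β ∈ b, α < β) →
          ∀ α ∈ a, ∀ β ∈ b, i < c α β

/-- An ultrafilter over a set `X` of ordinals, presented as a family of subsets of `X`. -/
structure IsUltrafilterOn (X : Set Ordinal.{0}) (U : Set (Set Ordinal.{0})) : Prop where
  mem_subset : ∀ A ∈ U, A ⊆ X
  univ_mem : X ∈ U
  empty_notMem : ∅ ∉ U
  mem_of_superset : ∀ A ∈ U, ∀ B, B ⊆ X → A ⊆ B → B ∈ U
  inter_mem : ∀ A ∈ U, ∀ B ∈ U, A ∩ B ∈ U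
  mem_or_compl_mem : ∀ A, A ⊆ X → A ∈ U ∨ X \ A ∈ U

/-- `δ`-completeness of an ultrafilter over `X`. -/
def IsComplete (δ : Cardinal.{0}) (X : Set Ordinal.{0})
    (U : Set (Set Ordinal.{0})) : Prop :=
  ∀ s : Set (Set Ordinal.{0}), s ⊆ U → MkLt s δ → X ∩ ⋂₀ s ∈ U

/-- Uniformity of an ultrafilter over `X`: all members have full cardinality. -/
def IsUniform (X : Set Ordinal.{0}) (U : Set (Set Ordinal.{0})) : Prop :=
  ∀ A ∈ U, Cardinal.mk A = Cardinal.mk X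

/-- Weak normality of an ultrafilter over a set of nonzero ordinals below `κ`. -/
def IsWeaklyNormal (κ : Ordinal.{0}) (X : Set Ordinal.{0})
    (U : Set (Set Ordinal.{0})) : Prop :=
  ∀ X' ∈ U, ∀ g : Ordinal.{0} → Ordinal.{0}, (∀ β ∈ X', g β < β) →
    ∃ γ < κ, {β ∈ X' | g β < γ} ∈ U

/-- A `□(κ,<ω)`-sequence. -/
def IsSquareSeqLtOmega (κ : Ordinal.{0})
    (𝒞 : Ordinal.{0} → Set (Set Ordinal.{0})) : Prop :=
  (∀ α, α < κ → Order.IsSuccLimit α →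
      (𝒞 α).Finite ∧ (𝒞 α).Nonempty ∧ ∀ C ∈ 𝒞 α, IsClubIn C α) ∧
  (∀ α, α < κ → Order.IsSuccLimit α → ∀ C ∈ 𝒞 α, ∀ β ∈ acc C, C ∩ Iio β ∈ 𝒞 β) ∧
  ¬ ∃ D : Set Ordinal.{0}, IsClubIn D κ ∧ ∀ α ∈ acc D, D ∩ Iio α ∈ 𝒞 α

/-- A weakly inaccessible cardinal: a regular limit cardinal. -/
def IsWInaccessible (c : Cardinal.{0}) : Prop :=
  c.IsRegular ∧ Order.IsSuccLimit c

/-- The Mahlo hierarchy (finite levels): `0`-Mahlo means weakly inaccessible, and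
`(n+1)`-Mahlo means regular with stationarily many `n`-Mahlo cardinals below. -/
def IsNMahlo : ℕ → Cardinal.{0} → Prop
  | 0 => fun c => IsWInaccessible c
  | (n + 1) => fun c => c.IsRegular ∧
      IsStationaryIn {α : Ordinal.{0} | ∃ μ : Cardinal.{0}, μ.ord = α ∧ IsNMahlo n μ} c.ord

/-- A set of ordinals is bounded below `α`. -/
def BoundedIn (s : Set Ordinal.{0}) (α : Ordinal.{0}) : Prop :=
  s = ∅ ∨ ∃ ε < α, ∀ η ∈ s, η ≤ ε

/-- The covering property for a coloring `c : [κ]² → θ`. -/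
def HasCoveringProperty (κ θ : Cardinal.{0})
    (c : Ordinal.{0} → Ordinal.{0} → Ordinal.{0}) : Prop :=
  ∀ α < κ.ord, ∃ f : Ordinal.{0} → Ordinal.{0},
    Set.InjOn f (Iio θ.ord) ∧
    (∀ i < θ.ord, α < f i ∧ f i < κ.ord ∧ Order.IsSuccLimit (f i) ∧ (f i).cof ≠ θ) ∧
    BoundedIn (Iio α \ ⋃ i ∈ Iio θ.ord, DleI c i (f i)) α

section AuxCSeq
open Cardinal


lemma bddA {s : Set Ordinal.{0}} {o : Ordinal.{0}} (h : s ⊆ Iio o) : BddAbove s :=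
  ⟨o, fun _ hx => (h hx).le⟩

lemma sSup_le_of_subset_Iio {s : Set Ordinal.{0}} {o : Ordinal.{0}} (h : s ⊆ Iio o) :
    sSup s ≤ o := by
  rcases s.eq_empty_or_nonempty with rfl | hne
  · simpa [csSup_empty] using Ordinal.zero_le o
  · exact csSup_le hne fun x hx => (h hx).le

lemma mk_le_of_subset_Iio {s : Set Ordinal.{0}} {o : Ordinal.{0}} (h : s ⊆ Iio o) :
    Cardinal.mk s ≤ Cardinal.lift.{1} o.card :=
  (Cardinal.mk_le_mk_of_subset h).trans (Ordinal.mk_Iio_ordinal o).le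

/-- Key smallness lemma: a subset of `Iio o` of cardinality less than `cof o` has
supremum below `o`. -/
lemma sSup_lt_of_mk_lt {s : Set Ordinal.{0}} {o : Ordinal.{0}} (hs : s ⊆ Iio o)
    (hc : Cardinal.mk s < Cardinal.lift.{1} o.cof) : sSup s < o := by
  rcases s.eq_empty_or_nonempty with rfl | hne
  · have ho : o ≠ 0 := by
      intro h; subst h
      simp [Ordinal.cof_zero] at hc
    rw [csSup_empty]
    exact pos_iff_ne_zero.2 ho
  · obtain ⟨c0, hc0⟩ := Cardinal.mem_range_lift_of_le hc.le
    have hmk : Cardinal.mk s = Cardinal.mk (ULift.{1} c0.out) := by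
      rw [Cardinal.mk_uLift, Cardinal.mk_out, hc0]
    obtain ⟨e⟩ := Cardinal.eq.1 hmk
    set f : c0.out → Ordinal.{0} := fun x => ((e.symm ⟨x⟩ : s) : Ordinal.{0}) with hf
    have hc0lt : Cardinal.mk c0.out < o.cof := by
      rw [Cardinal.mk_out]
      have := hc0 ▸ hc
      exact (Cardinal.lift_lt.{0,1}).1 this
    have hflt : ∀ i, f i < o := fun i => hs (e.symm ⟨i⟩).2
    have hsup : iSup f < o := Ordinal.iSup_lt_ord hc0lt hflt
    refine lt_of_le_of_lt (csSup_le hne fun x hx => ?_) hsup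
    have : f (e ⟨x, hx⟩).down = x := by
      simp only [hf]
      rw [show (⟨(e ⟨x, hx⟩).down⟩ : ULift.{1} c0.out) = e ⟨x, hx⟩ from rfl, Equiv.symm_apply_apply]
    rw [← this]
    exact le_ciSup (Ordinal.bddAbove_range f) _


/-- `s` is unbounded (cofinal) in `o`. -/
def Unb (s : Set Ordinal.{0}) (o : Ordinal.{0}) : Prop :=
  ∀ η < o, ∃ γ ∈ s, η < γ ∧ γ < o

lemma sSup_eq_of_unb {s : Set Ordinal.{0}} {o : Ordinal.{0}} (hs : s ⊆ Iio o)
    (h : ∀ η < o, ∃ γ ∈ s, η < γ) : sSup s = o := by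
  refine le_antisymm (sSup_le_of_subset_Iio hs) (le_of_forall_lt fun η hη => ?_)
  obtain ⟨γ, hγs, hγ⟩ := h η hη
  exact hγ.trans_le (le_csSup (bddA hs) hγs)

lemma unb_of_sSup_eq {X : Set Ordinal.{0}} {α : Ordinal.{0}}
    (h : sSup (X ∩ Iio α) = α) (h0 : 0 < α) :
    ∀ η < α, ∃ γ ∈ X, η < γ ∧ γ < α := by
  intro η hη
  have hne : (X ∩ Iio α).Nonempty := by
    rcases (X ∩ Iio α).eq_empty_or_nonempty with he | hne
    · rw [he, csSup_empty] at h
      exact absurd h.symm h0.ne'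
    · exact hne
  obtain ⟨γ, hγ, hlt⟩ := exists_lt_of_lt_csSup hne (h ▸ hη)
  exact ⟨γ, hγ.1, hlt, hγ.2⟩

lemma unb_of_mkEq {κ : Cardinal.{0}} (hκ : Cardinal.aleph0 ≤ κ) {s : Set Ordinal.{0}}
    (hs : s ⊆ Iio κ.ord) (hm : Cardinal.mk s = Cardinal.lift.{1} κ) : Unb s κ.ord := by
  intro η hη
  by_contra hcon
  push_neg at hcon
  have hsub : s ⊆ Iio (η + 1) := by
    intro γ hγ
    have := hcon γ hγ
    rcases lt_or_ge η γ with h1 | h1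
    · exact absurd (hs hγ) (by simpa using this h1)
    · exact lt_of_le_of_lt h1 (lt_add_one η)
  have h1 : η + 1 < κ.ord := (Cardinal.isSuccLimit_ord hκ).succ_lt hη
  have h2 : Cardinal.mk s ≤ Cardinal.lift.{1} (η+1).card := mk_le_of_subset_Iio hsub
  have h3 : Cardinal.lift.{1} (η+1).card < Cardinal.lift.{1} κ :=
    Cardinal.lift_lt.2 (Cardinal.lt_ord.1 h1)
  exact absurd (hm ▸ h2.trans_lt h3) (lt_irrefl _)

lemma mkEq_of_unb {κ : Cardinal.{0}} (hreg : κ.IsRegular) {s : Set Ordinal.{0}}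
    (hs : s ⊆ Iio κ.ord) (hu : Unb s κ.ord) : Cardinal.mk s = Cardinal.lift.{1} κ := by
  refine le_antisymm (by simpa [Cardinal.card_ord] using mk_le_of_subset_Iio hs) ?_
  by_contra hcon
  push_neg at hcon
  have hlt : Cardinal.mk s < Cardinal.lift.{1} κ.ord.cof := by rwa [hreg.cof_eq]
  have hsup : sSup s < κ.ord := sSup_lt_of_mk_lt hs hlt
  obtain ⟨γ, hγs, hγ, _⟩ := hu (sSup s) hsup
  exact absurd (le_csSup (bddA hs) hγs) (not_le.2 hγ)


/-- iterate -/
private def it (F : Ordinal.{0} → Ordinal.{0}) (η : Ordinal.{0}) : ℕ → Ordinal.{0}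
  | 0 => η
  | n+1 => F (it F η n)

lemma exists_omega_limit {κ : Cardinal.{0}} (hreg : κ.IsRegular) (hunc : Cardinal.aleph0 < κ)
    (F : Ordinal.{0} → Ordinal.{0}) (hF : ∀ γ < κ.ord, γ < F γ ∧ F γ < κ.ord)
    {η : Ordinal.{0}} (hη : η < κ.ord) :
    ∃ α, η < α ∧ α < κ.ord ∧ ∃ g : ℕ → Ordinal.{0},
      g 0 = η ∧ (∀ n, g (n+1) = F (g n)) ∧ (∀ n, g n < κ.ord) ∧ (∀ n, g n < g (n+1)) ∧
      (∀ n, g n < α) ∧ (∀ ζ < α, ∃ n, ζ < g n) := by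
  set g : ℕ → Ordinal.{0} := it F η with hg
  have hlt : ∀ n, g n < κ.ord := by
    intro n; induction n with
    | zero => exact hη
    | succ n ih => exact (hF _ ih).2
  have hstep : ∀ n, g n < g (n+1) := fun n => (hF _ (hlt n)).1
  have hmono : StrictMono g := strictMono_nat_of_lt_succ hstep
  set α := sSup (range g) with hα
  have hrsub : range g ⊆ Iio κ.ord := by rintro x ⟨n, rfl⟩; exact hlt n
  have hmk : Cardinal.mk (range g) < Cardinal.lift.{1} κ.ord.cof := by
    have h1 : Cardinal.mk (range g) ≤ Cardinal.lift.{1} (Cardinal.aleph0 : Cardinal.{0}) := by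
      have h2 := Cardinal.mk_range_le_lift.{0,1} (f := g)
      rwa [Cardinal.lift_id'.{0,1}, Cardinal.mk_nat] at h2
    exact h1.trans_lt (by rw [hreg.cof_eq]; exact Cardinal.lift_lt.2 hunc)
  have hαlt : α < κ.ord := sSup_lt_of_mk_lt hrsub hmk
  have hbdd : BddAbove (range g) := bddA hrsub
  have hle : ∀ n, g n < α := fun n =>
    lt_of_lt_of_le (hstep n) (le_csSup hbdd ⟨n+1, rfl⟩)
  have hηα : η < α := by
    have : g 0 < α := hle 0
    simpa [hg, it] using this
  refine ⟨α, hηα, hαlt, g, rfl, fun n => rfl, hlt, hstep, hle, fun ζ hζ => ?_⟩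
  obtain ⟨x, ⟨n, rfl⟩, hx⟩ := exists_lt_of_lt_csSup (s := range g) ⟨g 0, ⟨0, rfl⟩⟩ (hα ▸ hζ)
  exact ⟨n, hx⟩

lemma IsClosedIn.inter {C D : Set Ordinal.{0}} {K : Ordinal.{0}}
    (hC : IsClosedIn C K) (hD : IsClosedIn D K) : IsClosedIn (C ∩ D) K := by
  intro α hα h0 hsup
  have hne : (C ∩ D ∩ Iio α).Nonempty := by
    rcases (C ∩ D ∩ Iio α).eq_empty_or_nonempty with he | hne
    · rw [he, csSup_empty] at hsup; exact absurd hsup.symm h0.ne'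
    · exact hne
  have key : ∀ X : Set Ordinal.{0}, C ∩ D ⊆ X → IsClosedIn X K → α ∈ X := by
    intro X hX hXcl
    refine hXcl α hα h0 (le_antisymm (sSup_le_of_subset_Iio (inter_subset_right)) ?_)
    calc α = sSup (C ∩ D ∩ Iio α) := hsup.symm
    _ ≤ sSup (X ∩ Iio α) := csSup_le_csSup (bddA inter_subset_right) hne
        (fun x hx => ⟨hX hx.1, hx.2⟩)
  exact ⟨key C inter_subset_left hC, key D inter_subset_right hD⟩

/-- Diagonal intersection of clubs is club. -/
lemma diagonal_club {κ : Cardinal.{0}} (hreg : κ.IsRegular) (hunc : Cardinal.aleph0 < κ)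
    (D : Ordinal.{0} → Set Ordinal.{0}) (hD : ∀ ε < κ.ord, IsClubIn (D ε) κ.ord) :
    IsClubIn {α | α < κ.ord ∧ ∀ ε < α, α ∈ D ε} κ.ord := by
  classical
  have hKlim : Order.IsSuccLimit κ.ord := Cardinal.isSuccLimit_ord hreg.aleph0_le
  refine ⟨fun α hα => hα.1, ?_, ?_⟩
  · -- unbounded
    intro η hη
    -- nxt ε γ : an element of D ε above γ
    have hnxt : ∀ ε γ, ε < κ.ord → γ < κ.ord → ∃ x ∈ D ε, γ ≤ x := by
      intro ε γ hε hγ; exact (hD ε hε).2.1 γ hγ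
    set nxt : Ordinal.{0} → Ordinal.{0} → Ordinal.{0} := fun ε γ =>
      if h : ε < κ.ord ∧ γ < κ.ord then (hnxt ε γ h.1 h.2).choose else 0 with hnxtdef
    have hnxt1 : ∀ ε γ, ε < κ.ord → γ < κ.ord → nxt ε γ ∈ D ε ∧ γ ≤ nxt ε γ := by
      intro ε γ hε hγ
      simp only [hnxtdef, dif_pos (⟨hε, hγ⟩ : ε < κ.ord ∧ γ < κ.ord)]
      exact ⟨(hnxt ε γ hε hγ).choose_spec.1, (hnxt ε γ hε hγ).choose_spec.2⟩
    set F : Ordinal.{0} → Ordinal.{0} := fun γ =>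
      max (sSup ((fun ε => nxt ε γ + 1) '' Iio γ)) (γ + 1) with hFdef
    have hF : ∀ γ < κ.ord, γ < F γ ∧ F γ < κ.ord := by
      intro γ hγ
      constructor
      · exact lt_of_lt_of_le (lt_add_one γ) (le_max_right _ _)
      · refine max_lt ?_ (hKlim.succ_lt hγ)
        refine sSup_lt_of_mk_lt ?_ ?_
        · rintro x ⟨ε, hε, rfl⟩
          have h1 := (hnxt1 ε γ (hε.trans hγ) hγ).1
          exact hKlim.succ_lt ((hD ε (hε.trans hγ)).1 h1)
        · refine lt_of_le_of_lt (Cardinal.mk_image_le) ?_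
          refine lt_of_le_of_lt (mk_le_of_subset_Iio (subset_refl _)) ?_
          rw [hreg.cof_eq]
          exact Cardinal.lift_lt.2 (Cardinal.lt_ord.1 hγ)
    obtain ⟨α, hηα, hαK, g, hg0, hgs, hgK, hgmono, hgα, hgcof⟩ :=
      exists_omega_limit hreg hunc F hF hη
    refine ⟨α, ⟨hαK, ?_⟩, hηα.le⟩
    intro ε hε
    obtain ⟨n, hn⟩ := hgcof ε hε
    have h0α : 0 < α := lt_of_le_of_lt zero_le' (hgα 0)
    -- D ε ∩ Iio α is unbounded in α
    have hunb : ∀ ζ < α, ∃ x ∈ D ε ∩ Iio α, ζ < x := by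
      intro ζ hζ
      obtain ⟨m, hm⟩ := hgcof ζ hζ
      set k := max m n with hk
      have hgm : StrictMono g := strictMono_nat_of_lt_succ hgmono
      have hζk : ζ < g k := lt_of_lt_of_le hm (hgm.monotone (le_max_left m n))
      have hεk : ε < g k := lt_of_lt_of_le hn (hgm.monotone (le_max_right m n))
      have hx := hnxt1 ε (g k) (hε.trans hαK) (hgK k)
      refine ⟨nxt ε (g k), ⟨hx.1, ?_⟩, lt_of_lt_of_le hζk hx.2⟩
      have h1 : nxt ε (g k) + 1 ≤ F (g k) := by
        have hmem : nxt ε (g k) + 1 ∈ (fun ε' => nxt ε' (g k) + 1) '' Iio (g k) :=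
          ⟨ε, hεk, rfl⟩
        have hbdd : BddAbove ((fun ε' => nxt ε' (g k) + 1) '' Iio (g k)) := by
          refine bddA (o := κ.ord) ?_
          rintro x ⟨ε', hε', rfl⟩
          exact hKlim.succ_lt ((hD ε' (hε'.trans ((hgK k)))).1
            (hnxt1 ε' (g k) (hε'.trans (hgK k)) (hgK k)).1)
        simp only [hFdef]
        exact le_trans (le_csSup hbdd hmem) (le_max_left _ _)
      calc nxt ε (g k) < nxt ε (g k) + 1 := lt_add_one _
      _ ≤ F (g k) := h1
      _ = g (k+1) := (hgs k).symm
      _ < α := hgα (k+1)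
    have hsup : sSup (D ε ∩ Iio α) = α :=
      sSup_eq_of_unb (inter_subset_right) (fun ζ hζ => by
        obtain ⟨x, hx1, hx2⟩ := hunb ζ hζ; exact ⟨x, hx1, hx2⟩)
    exact (hD ε (hε.trans hαK)).2.2 α hαK h0α hsup
  · -- closed
    intro α hα h0 hsup
    have hu := unb_of_sSup_eq hsup h0
    refine ⟨hα, fun ε hε => ?_⟩
    have hunb : ∀ ζ < α, ∃ x ∈ D ε ∩ Iio α, ζ < x := by
      intro ζ hζ
      obtain ⟨γ, hγmem, hγ1, hγ2⟩ := hu (max ζ ε) (max_lt hζ hε)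
      exact ⟨γ, ⟨hγmem.2 ε (lt_of_le_of_lt (le_max_right ζ ε) hγ1), hγ2⟩,
        lt_of_le_of_lt (le_max_left ζ ε) hγ1⟩
    have hsupε : sSup (D ε ∩ Iio α) = α :=
      sSup_eq_of_unb (inter_subset_right) (fun ζ hζ => by
        obtain ⟨x, hx1, hx2⟩ := hunb ζ hζ; exact ⟨x, hx1, hx2⟩)
    exact (hD ε (hε.trans hα)).2.2 α hα h0 hsupε

lemma club_inter {κ : Cardinal.{0}} (hreg : κ.IsRegular) (hunc : Cardinal.aleph0 < κ)
    {C D : Set Ordinal.{0}} (hC : IsClubIn C κ.ord) (hD : IsClubIn D κ.ord) :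
    IsClubIn (C ∩ D) κ.ord := by
  classical
  have hKlim : Order.IsSuccLimit κ.ord := Cardinal.isSuccLimit_ord hreg.aleph0_le
  refine ⟨fun x hx => hC.1 hx.1, ?_, hC.2.2.inter hD.2.2⟩
  intro η hη
  set E : Ordinal.{0} → Set Ordinal.{0} := fun ε => if ε = 0 then C else D with hE
  have hEclub : ∀ ε < κ.ord, IsClubIn (E ε) κ.ord := by
    intro ε _
    by_cases h : ε = 0 <;> simp [hE, h, hC, hD]
  have hdiag := (diagonal_club hreg hunc E hEclub).2.1
  have h2 : η + 1 + 1 < κ.ord := hKlim.succ_lt (hKlim.succ_lt hη)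
  obtain ⟨γ, hγ, hγge⟩ := hdiag (η + 1 + 1) h2
  have h1γ : (1 : Ordinal) < γ := by
    have h1 : (1 : Ordinal) ≤ η + 1 := le_add_self
    exact lt_of_lt_of_le (lt_of_le_of_lt h1 (lt_add_one _)) hγge
  have h0γ : (0 : Ordinal) < γ := lt_trans zero_lt_one h1γ
  have hCmem : γ ∈ C := by
    have := hγ.2 0 h0γ
    simpa [hE] using this
  have hDmem : γ ∈ D := by
    have := hγ.2 1 h1γ
    simpa [hE] using this
  exact ⟨γ, ⟨hCmem, hDmem⟩, le_trans (le_trans (le_of_lt (lt_add_one η))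
    (le_of_lt (lt_add_one _))) hγge⟩

lemma stationary_inter_club {κ : Cardinal.{0}} (hreg : κ.IsRegular)
    (hunc : Cardinal.aleph0 < κ) {S D : Set Ordinal.{0}}
    (hS : IsStationaryIn S κ.ord) (hD : IsClubIn D κ.ord) :
    IsStationaryIn (S ∩ D) κ.ord := by
  intro C hC
  obtain ⟨x, hxS, hxD, hxC⟩ := hS (D ∩ C) (club_inter hreg hunc hD hC)
  exact ⟨x, ⟨hxS, hxD⟩, hxC⟩

lemma stationary_mono {κ : Cardinal.{0}} {S T : Set Ordinal.{0}} (h : S ⊆ T)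
    (hS : IsStationaryIn S κ.ord) : IsStationaryIn T κ.ord := by
  intro C hC
  obtain ⟨x, hx1, hx2⟩ := hS C hC
  exact ⟨x, h hx1, hx2⟩

lemma club_Ioi {κ : Cardinal.{0}} (hreg : κ.IsRegular) {ε : Ordinal.{0}} (hε : ε < κ.ord) :
    IsClubIn ({γ | ε < γ} ∩ Iio κ.ord) κ.ord := by
  have hKlim : Order.IsSuccLimit κ.ord := Cardinal.isSuccLimit_ord hreg.aleph0_le
  refine ⟨inter_subset_right, ?_, ?_⟩
  · intro η hη
    refine ⟨max η ε + 1, ⟨?_, hKlim.succ_lt (max_lt hη hε)⟩, ?_⟩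
    · exact lt_of_le_of_lt (le_max_right η ε) (lt_add_one _)
    · exact le_of_lt (lt_of_le_of_lt (le_max_left η ε) (lt_add_one _))
  · intro α hα h0 hsup
    obtain ⟨γ, hγmem, _, hγα⟩ := unb_of_sSup_eq hsup h0 0 h0
    exact ⟨lt_trans hγmem.1 hγα, hα⟩

lemma stationary_unb {κ : Cardinal.{0}} (hreg : κ.IsRegular) {S : Set Ordinal.{0}}
    (hS : IsStationaryIn S κ.ord) : Unb S κ.ord := by
  intro η hη
  obtain ⟨γ, hγS, hγ1, hγ2⟩ := hS _ (club_Ioi hreg hη)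
  exact ⟨γ, hγS, hγ1, hγ2⟩

lemma bdd_succ_image {U : Set Ordinal.{0}} {K : Ordinal.{0}} (hU : U ⊆ Iio K) :
    K ∈ upperBounds ((· + 1) '' U) := by
  rintro x ⟨u, hu, rfl⟩
  show u + 1 ≤ K
  rw [Ordinal.add_one_eq_succ]
  exact Order.succ_le_of_lt (hU hu)

lemma ssup_le_of_subset_Iio {U : Set Ordinal.{0}} {K : Ordinal.{0}} (hU : U ⊆ Iio K) :
    ssup U ≤ K := by
  rcases U.eq_empty_or_nonempty with rfl | hne
  · simp [ssup, csSup_empty]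
  · exact csSup_le (hne.image _) (bdd_succ_image hU)

lemma lt_ssup_of_mem {U : Set Ordinal.{0}} {K u α : Ordinal.{0}} (hU : U ⊆ Iio K)
    (hu : u ∈ U) (hα : α ≤ u) : α < ssup U := by
  have h1 : u + 1 ≤ ssup U := le_csSup ⟨K, bdd_succ_image hU⟩ ⟨u, hu, rfl⟩
  exact lt_of_le_of_lt hα (lt_of_lt_of_le (lt_add_one u) h1)

lemma mem_accPlus_of {U : Set Ordinal.{0}} {K α : Ordinal.{0}} (hU : U ⊆ Iio K)
    (hub : ∃ u ∈ U, α ≤ u) (h0 : 0 < α)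
    (hloc : ∀ η < α, ∃ γ ∈ U, η < γ ∧ γ < α) : α ∈ accPlus U := by
  obtain ⟨u, hu, hαu⟩ := hub
  refine ⟨lt_ssup_of_mem hU hu hαu, h0, ?_⟩
  exact sSup_eq_of_unb inter_subset_right fun η hη => by
    obtain ⟨γ, h1, h2, h3⟩ := hloc η hη; exact ⟨γ, ⟨h1, h3⟩, h2⟩

lemma accPlus_club {κ : Cardinal.{0}} (hreg : κ.IsRegular) (hunc : Cardinal.aleph0 < κ)
    {U : Set Ordinal.{0}} (hU : U ⊆ Iio κ.ord) (hu : Unb U κ.ord) :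
    IsClubIn (accPlus U) κ.ord := by
  classical
  refine ⟨?_, ?_, ?_⟩
  · intro α hα
    exact lt_of_lt_of_le hα.1 (ssup_le_of_subset_Iio hU)
  · intro η hη
    set F : Ordinal.{0} → Ordinal.{0} := fun γ =>
      if h : γ < κ.ord then (hu γ h).choose else 0 with hF
    have hFspec : ∀ γ < κ.ord, F γ ∈ U ∧ γ < F γ ∧ F γ < κ.ord := by
      intro γ hγ
      simp only [hF, dif_pos hγ]
      exact (hu γ hγ).choose_spec
    obtain ⟨α, hηα, hαK, g, hg0, hgs, hgK, hgmono, hgα, hgcof⟩ :=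
      exists_omega_limit hreg hunc F (fun γ hγ => ⟨(hFspec γ hγ).2.1, (hFspec γ hγ).2.2⟩) hη
    obtain ⟨u, huU, hαu, _⟩ := hu α hαK
    refine ⟨α, mem_accPlus_of hU ⟨u, huU, hαu.le⟩ (lt_of_le_of_lt zero_le' hηα)
      (fun ζ hζ => ?_), hηα.le⟩
    obtain ⟨n, hn⟩ := hgcof ζ hζ
    have h1 : g (n+1) ∈ U := by rw [hgs n]; exact (hFspec _ (hgK n)).1
    exact ⟨g (n+1), h1, lt_trans hn (hgmono n), hgα (n+1)⟩
  · intro α hα h0 hsup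
    obtain ⟨u, huU, hαu, _⟩ := hu α hα
    refine mem_accPlus_of hU ⟨u, huU, hαu.le⟩ h0 fun η hη => ?_
    obtain ⟨γ, hγacc, hηγ, hγα⟩ := unb_of_sSup_eq hsup h0 η hη
    obtain ⟨δ, hδU, hηδ, hδγ⟩ := unb_of_sSup_eq hγacc.2.2 hγacc.2.1 η hηγ
    exact ⟨δ, hδU, hηδ, lt_trans hδγ hγα⟩

lemma fodor {κ : Cardinal.{0}} (hreg : κ.IsRegular) (hunc : Cardinal.aleph0 < κ)
    {S : Set Ordinal.{0}} (hS : IsStationaryIn S κ.ord)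
    (g : Ordinal.{0} → Ordinal.{0}) (hg : ∀ α ∈ S, g α < α) (hSsub : S ⊆ Iio κ.ord) :
    ∃ ε < κ.ord, IsStationaryIn {α | α ∈ S ∧ g α ≤ ε} κ.ord := by
  classical
  by_contra hcon
  push_neg at hcon
  have hD : ∀ ε < κ.ord, ∃ D, IsClubIn D κ.ord ∧ ¬({α | α ∈ S ∧ g α ≤ ε} ∩ D).Nonempty := by
    intro ε hε
    have := hcon ε hε
    rw [IsStationaryIn] at this
    push_neg at this
    obtain ⟨D, hD1, hD2⟩ := this
    exact ⟨D, hD1, by rw [hD2]; exact Set.not_nonempty_empty⟩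
  set D : Ordinal.{0} → Set Ordinal.{0} := fun ε =>
    if h : ε < κ.ord then (hD ε h).choose else univ with hDdef
  have hD1 : ∀ ε < κ.ord, IsClubIn (D ε) κ.ord := by
    intro ε hε; simp only [hDdef, dif_pos hε]; exact (hD ε hε).choose_spec.1
  have hD2 : ∀ ε < κ.ord, ¬({α | α ∈ S ∧ g α ≤ ε} ∩ D ε).Nonempty := by
    intro ε hε; simp only [hDdef, dif_pos hε]; exact (hD ε hε).choose_spec.2
  obtain ⟨α, hαS, hαd⟩ := hS _ (diagonal_club hreg hunc D hD1)
  have hgα : g α < α := hg α hαS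
  have hεK : g α < κ.ord := lt_trans hgα (hSsub hαS)
  have hmem : α ∈ {β | β ∈ S ∧ g β ≤ g α} ∩ D (g α) := ⟨⟨hαS, le_refl _⟩, hαd.2 (g α) hgα⟩
  exact hD2 (g α) hεK ⟨α, hmem⟩

end AuxCSeq

open Cardinal in
theorem statement0
    (κ : Cardinal.{0}) (hκreg : κ.IsRegular) (hκunc : Cardinal.aleph0 < κ)
    (C : Ordinal.{0} → Set Ordinal.{0}) (hC : IsCSeq κ.ord C)
    (χ : Cardinal.{0}) (hχ : χ < supReg κ)
    (A Δ' Γ : Set Ordinal.{0})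
    (hA : A ⊆ Iio κ.ord) (hAcard : MkEq A κ)
    (hΔ'sub : Δ' ⊆ Iio κ.ord) (hΔ'card : MkEq Δ' κ)
    (hΓsub : Γ ⊆ Iio κ.ord) (hΓcard : MkEq Γ κ)
    (b' : Ordinal.{0} → Set Ordinal.{0})
    (hb' : ∀ α ∈ A, b' α ⊆ Γ ∧ MkLe (b' α) χ)
    (hcov : ∀ α ∈ A, Δ' ∩ Iio α ⊆ ⋃ β ∈ b' α, C β)
    (Sta : Set Ordinal.{0})
    (hStaSub : Sta ⊆ {α | α < κ.ord ∧ χ < α.cof})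
    (hStaStat : IsStationaryIn Sta κ.ord) :
    ∃ (Δ₀ Δ₁ : Set Ordinal.{0}) (b : Ordinal.{0} → Set Ordinal.{0}),
      Δ₀ ⊆ Iio κ.ord ∧ MkEq Δ₀ κ ∧
      Δ₁ ⊆ Iio κ.ord ∧ MkEq Δ₁ κ ∧
      (∀ α < κ.ord, b α ⊆ Γ ∧ MkLe (b α) χ) ∧
      (∀ α < κ.ord, ∀ β ∈ b α, α ≤ β) ∧
      Δ₀ ⊆ Δ' ∧
      accPlus Δ₁ ∩ {α | α < κ.ord ∧ χ < α.cof} ⊆ Δ₁ ∧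
      (∀ α < κ.ord, Δ₀ ∩ Iio α ⊆ ⋃ β ∈ b α, C β) ∧
      (∀ α < κ.ord, Δ₁ ∩ Iio α ⊆ ⋃ β ∈ b α, acc (C β)) ∧
      IsStationaryIn {α ∈ Sta | ∀ β ∈ b α, sSup (C β ∩ Iio α) = α} κ.ord := by
  classical
  have hℵ : Cardinal.aleph0 ≤ κ := hκreg.aleph0_le
  have hAunb : Unb A κ.ord := unb_of_mkEq hℵ hA hAcard
  have hΔ'unb : Unb Δ' κ.ord := unb_of_mkEq hℵ hΔ'sub hΔ'card
  -- choice of an element of `A` above any ordinal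
  set aF : Ordinal.{0} → Ordinal.{0} := fun α =>
    if h : α < κ.ord then (hAunb α h).choose else 0 with haFdef
  have haF : ∀ α < κ.ord, aF α ∈ A ∧ α < aF α ∧ aF α < κ.ord := by
    intro α h
    simp only [haFdef, dif_pos h]
    obtain ⟨h1, h2, h3⟩ := (hAunb α h).choose_spec
    exact ⟨h1, h2, h3⟩
  -- the sup of the "bad" local sups
  set gF : Ordinal.{0} → Ordinal.{0} := fun σ =>
    sSup ((fun β => sSup (C β ∩ Iio σ)) ''
      {β | β ∈ b' (aF σ) ∧ sSup (C β ∩ Iio σ) ≠ σ}) with hgFdef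
  set Sta' : Set Ordinal.{0} := Sta ∩ accPlus Δ' with hSta'def
  have hSta'stat : IsStationaryIn Sta' κ.ord :=
    stationary_inter_club hκreg hκunc hStaStat (accPlus_club hκreg hκunc hΔ'sub hΔ'unb)
  have hSta'sub : Sta' ⊆ Iio κ.ord := fun α hα => (hStaSub hα.1).1
  -- gF is regressive on Sta'
  have hgreg : ∀ σ ∈ Sta', gF σ < σ := by
    intro σ hσ
    have hσK : σ < κ.ord := (hStaSub hσ.1).1
    have hσcof : χ < σ.cof := (hStaSub hσ.1).2
    have haFσ := haF σ hσK
    simp only [hgFdef]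
    refine sSup_lt_of_mk_lt ?_ ?_
    · rintro x ⟨β, hβ, rfl⟩
      exact lt_of_le_of_ne (sSup_le_of_subset_Iio inter_subset_right) hβ.2
    · refine lt_of_le_of_lt (Cardinal.mk_image_le) ?_
      refine lt_of_le_of_lt (Cardinal.mk_le_mk_of_subset (fun β hβ => hβ.1)) ?_
      exact lt_of_le_of_lt ((hb' _ haFσ.1).2) (Cardinal.lift_lt.2 hσcof)
  obtain ⟨ε, hεK, hSta''⟩ := fodor hκreg hκunc hSta'stat gF hgreg hSta'sub
  set Sta3 : Set Ordinal.{0} :=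
    {α | α ∈ Sta' ∧ gF α ≤ ε} ∩ ({γ | ε < γ} ∩ Iio κ.ord) with hSta3def
  have hSta3stat : IsStationaryIn Sta3 κ.ord :=
    stationary_inter_club hκreg hκunc hSta'' (club_Ioi hκreg hεK)
  have hSta3unb : Unb Sta3 κ.ord := stationary_unb hκreg hSta3stat
  have hSta3sub : Sta3 ⊆ Iio κ.ord := fun α hα => hα.2.2
  -- Δ₀
  set Δ₀ : Set Ordinal.{0} := Δ' ∩ {δ | ε < δ} with hΔ₀def
  have hΔ₀sub : Δ₀ ⊆ Iio κ.ord := fun x hx => hΔ'sub hx.1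
  have hΔ₀unb : Unb Δ₀ κ.ord := by
    intro η hη
    obtain ⟨δ, hδ, h1, h2⟩ := hΔ'unb (max η ε) (max_lt hη hεK)
    exact ⟨δ, ⟨hδ, lt_of_le_of_lt (le_max_right η ε) h1⟩,
      lt_of_le_of_lt (le_max_left η ε) h1, h2⟩
  have hΔ₀card : MkEq Δ₀ κ := mkEq_of_unb hκreg hΔ₀sub hΔ₀unb
  -- σF: least element of Sta3 above a given ordinal
  set σF : Ordinal.{0} → Ordinal.{0} := fun α => sInf {σ | σ ∈ Sta3 ∧ α ≤ σ} with hσFdef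
  have hσF : ∀ α < κ.ord, σF α ∈ Sta3 ∧ α ≤ σF α := by
    intro α hα
    have hne : {σ | σ ∈ Sta3 ∧ α ≤ σ}.Nonempty := by
      obtain ⟨γ, h1, h2, _⟩ := hSta3unb α hα
      exact ⟨γ, h1, h2.le⟩
    exact csInf_mem hne
  have hσFeq : ∀ α ∈ Sta3, σF α = α := by
    intro α hα
    exact le_antisymm (csInf_le (OrderBot.bddBelow _) ⟨hα, le_rfl⟩)
      (hσF α (hSta3sub hα)).2
  -- the progressive function b
  set b : Ordinal.{0} → Set Ordinal.{0} := fun α =>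
    {β | β ∈ b' (aF (σF α)) ∧ sSup (C β ∩ Iio (σF α)) = σF α} with hbdef
  have hbcond : ∀ α < κ.ord, b α ⊆ Γ ∧ MkLe (b α) χ := by
    intro α hα
    have hσ := hσF α hα
    have hσK : σF α < κ.ord := hSta3sub hσ.1
    have haFσ := haF _ hσK
    constructor
    · exact fun β hβ => (hb' _ haFσ.1).1 hβ.1
    · exact le_trans (Cardinal.mk_le_mk_of_subset (fun β hβ => hβ.1)) (hb' _ haFσ.1).2
  have hprog : ∀ α < κ.ord, ∀ β ∈ b α, α ≤ β := by
    intro α hα β hβ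
    have hσ := hσF α hα
    have hβΓ : β ∈ Γ := (hbcond α hα).1 hβ
    have hβK : β ∈ Iio κ.ord := hΓsub hβΓ
    rcases le_or_gt (σF α) β with h | h
    · exact hσ.2.trans h
    · exfalso
      have h1 : sSup (C β ∩ Iio (σF α)) ≤ β :=
        sSup_le_of_subset_Iio (fun x hx => (hC β hβK).1 hx.1)
      rw [hβ.2] at h1
      exact absurd h1 (not_le.2 h)
  -- the main covering property at points of Sta3
  have hcov0 : ∀ α < κ.ord, Δ₀ ∩ Iio (σF α) ⊆ ⋃ β ∈ b α, C β := by
    intro α hα δ hδ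
    obtain ⟨⟨hδΔ', hδε⟩, hδσ⟩ := hδ
    have hσ := hσF α hα
    obtain ⟨⟨hσSta', hσg⟩, hσε, hσK⟩ := hσ.1
    have haFσ := haF _ hσK
    have hδa : δ ∈ Δ' ∩ Iio (aF (σF α)) := ⟨hδΔ', lt_trans hδσ haFσ.2.1⟩
    obtain ⟨β, hβ, hδC⟩ := Set.mem_iUnion₂.1 (hcov _ haFσ.1 hδa)
    by_cases hgood : sSup (C β ∩ Iio (σF α)) = σF α
    · exact Set.mem_biUnion ⟨hβ, hgood⟩ hδC
    · exfalso
      have h1 : δ ≤ sSup (C β ∩ Iio (σF α)) :=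
        le_csSup (bddA inter_subset_right) ⟨hδC, hδσ⟩
      have h2 : sSup (C β ∩ Iio (σF α)) ≤ gF (σF α) := by
        simp only [hgFdef]
        refine le_csSup ?_ ⟨β, ⟨hβ, hgood⟩, rfl⟩
        refine ⟨σF α, ?_⟩
        rintro x ⟨β', _, rfl⟩
        exact sSup_le_of_subset_Iio inter_subset_right
      exact absurd ((h1.trans h2).trans hσg) (not_le.2 hδε)
  have hcovΔ₀ : ∀ α < κ.ord, Δ₀ ∩ Iio α ⊆ ⋃ β ∈ b α, C β := by
    intro α hα δ hδ
    exact hcov0 α hα ⟨hδ.1, lt_of_lt_of_le hδ.2 (hσF α hα).2⟩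
  -- Sta3 lies in acc⁺(Δ₀) and in E
  set E : Set Ordinal.{0} := {α | α < κ.ord ∧ χ < α.cof} with hEdef
  have hSta3E : Sta3 ⊆ E := fun α hα => hStaSub hα.1.1.1
  have hSta3acc : Sta3 ⊆ accPlus Δ₀ := by
    intro α hα
    obtain ⟨⟨hαSta', _⟩, hαε, hαK⟩ := hα
    have hαacc : α ∈ accPlus Δ' := hαSta'.2
    have h0 : 0 < α := lt_of_le_of_lt (zero_le (a := ε)) hαε
    refine mem_accPlus_of hΔ₀sub ?_ h0 ?_
    · obtain ⟨u, hu, h1, _⟩ := hΔ₀unb α hαK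
      exact ⟨u, hu, h1.le⟩
    · intro η hη
      obtain ⟨γ, hγ, h1, h2⟩ := unb_of_sSup_eq hαacc.2.2 hαacc.2.1
        (max η ε) (max_lt hη hαε)
      exact ⟨γ, ⟨hγ, lt_of_le_of_lt (le_max_right η ε) h1⟩,
        lt_of_le_of_lt (le_max_left η ε) h1, h2⟩
  -- Δ₁
  set Δ₁ : Set Ordinal.{0} := accPlus Δ₀ ∩ E with hΔ₁def
  have hΔ₁sub : Δ₁ ⊆ Iio κ.ord := fun x hx => hx.2.1
  have hΔ₁unb : Unb Δ₁ κ.ord := by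
    intro η hη
    obtain ⟨γ, hγ, h1, h2⟩ := hSta3unb η hη
    exact ⟨γ, ⟨hSta3acc hγ, hSta3E hγ⟩, h1, h2⟩
  have hΔ₁card : MkEq Δ₁ κ := mkEq_of_unb hκreg hΔ₁sub hΔ₁unb
  -- pigeonhole
  have hpig : ∀ δ ∈ E, sSup (Δ₀ ∩ Iio δ) = δ → ∀ α, δ < α → α < κ.ord →
      ∃ β ∈ b α, sSup (C β ∩ Iio δ) = δ := by
    intro δ hδE hδsup α hδα hα
    by_contra hno
    push_neg at hno
    have hδ0 : 0 < δ := by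
      rcases eq_zero_or_pos δ with rfl | h
      · have := hδE.2
        rw [Ordinal.cof_zero] at this
        exact absurd this (Cardinal.zero_le χ).not_gt
      · exact h
    set T : Set Ordinal.{0} := (fun β => sSup (C β ∩ Iio δ)) '' (b α) with hTdef
    have hTsub : T ⊆ Iio δ := by
      rintro x ⟨β, hβ, rfl⟩
      exact lt_of_le_of_ne (sSup_le_of_subset_Iio inter_subset_right) (hno β hβ)
    have hTmk : Cardinal.mk T < Cardinal.lift.{1} δ.cof :=
      lt_of_le_of_lt (Cardinal.mk_image_le)
        (lt_of_le_of_lt (hbcond α hα).2 (Cardinal.lift_lt.2 hδE.2))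
    have hTlt : sSup T < δ := sSup_lt_of_mk_lt hTsub hTmk
    have hne : (Δ₀ ∩ Iio δ).Nonempty := by
      rcases (Δ₀ ∩ Iio δ).eq_empty_or_nonempty with he | h
      · rw [he, csSup_empty] at hδsup
        exact absurd hδsup.symm hδ0.ne'
      · exact h
    have hle : sSup (Δ₀ ∩ Iio δ) ≤ sSup T := by
      refine csSup_le hne fun x hx => ?_
      have hxα : x ∈ Δ₀ ∩ Iio α := ⟨hx.1, lt_trans hx.2 hδα⟩
      obtain ⟨β, hβ, hxC⟩ := Set.mem_iUnion₂.1 (hcovΔ₀ α hα hxα)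
      refine le_trans (le_csSup (bddA inter_subset_right) (⟨hxC, hx.2⟩ :
        x ∈ C β ∩ Iio δ)) ?_
      exact le_csSup (bddA hTsub) ⟨β, hβ, rfl⟩
    rw [hδsup] at hle
    exact absurd (hle.trans_lt hTlt) (lt_irrefl δ)
  -- covering of Δ₁ by accumulation points
  have hcovΔ₁ : ∀ α < κ.ord, Δ₁ ∩ Iio α ⊆ ⋃ β ∈ b α, acc (C β) := by
    intro α hα δ hδ
    obtain ⟨⟨hδacc, hδE⟩, hδα⟩ := hδ
    obtain ⟨β, hβ, hsupδ⟩ := hpig δ hδE hδacc.2.2 α hδα hα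
    have hαβ : α ≤ β := hprog α hα β hβ
    have hδβ : δ < β := lt_of_lt_of_le hδα hαβ
    have hβK : β ∈ Iio κ.ord := hΓsub ((hbcond α hα).1 hβ)
    have hδC : δ ∈ C β := (hC β hβK).2.1 δ hδβ hδacc.2.1 hsupδ
    refine Set.mem_biUnion hβ ⟨hδC, ?_, hδacc.2.1, hsupδ⟩
    exact lt_ssup_of_mem (hC β hβK).1 hδC le_rfl
  -- acc⁺-closure of Δ₁
  have hΔ₁closed : accPlus Δ₁ ∩ E ⊆ Δ₁ := by
    intro δ hδ
    obtain ⟨hδacc, hδE⟩ := hδ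
    refine ⟨?_, hδE⟩
    refine mem_accPlus_of hΔ₀sub ?_ hδacc.2.1 ?_
    · obtain ⟨u, hu, h1, _⟩ := hΔ₀unb δ hδE.1
      exact ⟨u, hu, h1.le⟩
    · intro η hη
      obtain ⟨ξ, hξ, h1, h2⟩ := unb_of_sSup_eq hδacc.2.2 hδacc.2.1 η hη
      obtain ⟨γ, hγ, h3, h4⟩ := unb_of_sSup_eq hξ.1.2.2 hξ.1.2.1 η h1
      exact ⟨γ, hγ, h3, lt_trans h4 h2⟩
  -- final stationarity
  have hfinal : IsStationaryIn {α ∈ Sta | ∀ β ∈ b α, sSup (C β ∩ Iio α) = α} κ.ord := by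
    refine stationary_mono ?_ hSta3stat
    intro α hα
    refine ⟨hα.1.1.1, fun β hβ => ?_⟩
    have h1 := hβ.2
    rwa [hσFeq α hα] at h1
  exact ⟨Δ₀, Δ₁, b, hΔ₀sub, hΔ₀card, hΔ₁sub, hΔ₁card, hbcond, hprog,
    inter_subset_left, hΔ₁closed, hcovΔ₀, hcovΔ₁, hfinal⟩


end CSeq
end
end

section
/- For every infinite cardinal λ, the C-sequence number of λ⁺ satisfies cf(λ) ≤ χ(λ⁺) ≤ λ. In particular, if λ is regular, then χ(λ⁺) = λ. -/
noncomputable section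

open Set

namespace CSeq

-- auxiliary section to be inserted before `theorem statement2`
namespace Statement2Aux

open Cardinal Set

lemma lt_add_one' (o : Ordinal.{0}) : o < o + 1 := by
  rw [Ordinal.add_one_eq_succ]; exact Order.lt_succ o

lemma bddAbove_of_subset_Iio {s : Set Ordinal.{0}} {β : Ordinal.{0}} (h : s ⊆ Iio β) :
    BddAbove s := ⟨β, fun x hx => (h hx).le⟩

lemma sSup_Iio_limit {β : Ordinal.{0}} (hβ : Order.IsSuccLimit β) : sSup (Iio β) = β := by
  apply le_antisymm (csSup_le' fun x hx => le_of_lt hx)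
  refine le_of_forall_lt fun a ha => ?_
  exact lt_of_lt_of_le (Order.lt_succ a)
    (le_csSup (bddAbove_of_subset_Iio fun x hx => hx) (hβ.succ_lt ha))

lemma sSup_Iio_succ (γ : Ordinal.{0}) : sSup (Iio (γ + 1)) = γ := by
  rw [Ordinal.add_one_eq_succ, Order.Iio_succ, csSup_Iic]

lemma succ_add_one_injective : Function.Injective (fun γ : Ordinal.{0} => γ + 1) := by
  intro a b h
  simp only [Ordinal.add_one_eq_succ] at h
  exact Order.succ_injective h

lemma mem_of_succ {κo : Ordinal.{0}} {C : Ordinal.{0} → Set Ordinal.{0}}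
    (hC : CSeq.IsCSeq κo C) {x : Ordinal.{0}} (hx0 : x ≠ 0) (hx : x + 1 < κo) :
    x ∈ C (x + 1) := by
  obtain ⟨hsub, hcl, hsup⟩ := hC (x + 1) hx
  by_contra hxc
  have h1 : C (x + 1) ⊆ Iio x := by
    intro c hc
    have hcx : c < x + 1 := hsub hc
    rw [Ordinal.add_one_eq_succ, Order.lt_succ_iff] at hcx
    exact mem_Iio.mpr (lt_of_le_of_ne hcx fun h => hxc (h ▸ hc))
  have h2 : C (x + 1) ∩ Iio x = C (x + 1) := inter_eq_self_of_subset_left h1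
  exact hxc (hcl x (lt_add_one' x) (pos_iff_ne_zero.mpr hx0)
    (by rw [h2, hsup, sSup_Iio_succ]))

/-- The upper bound: every C-sequence over `λ⁺` is covered with `λ`-sized b's. -/
lemma covers_lam (lam : Cardinal.{0}) (hlam : Cardinal.aleph0 ≤ lam) :
    ∀ C, CSeq.IsCSeq (Order.succ lam).ord C →
      CSeq.CSeqCovers (Order.succ lam) (Iio (Order.succ lam).ord) C lam := by
  intro C hC
  have hκinf : Cardinal.aleph0 ≤ Order.succ lam := hlam.trans (Order.le_succ lam)
  have hκlim : Order.IsSuccLimit (Order.succ lam).ord := Cardinal.isSuccLimit_ord hκinf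
  have hIio : Cardinal.mk ↥(Iio (Order.succ lam).ord) = Cardinal.lift.{1} (Order.succ lam) := by
    rw [Ordinal.mk_Iio_ordinal, Cardinal.card_ord]
  refine ⟨Iio (Order.succ lam).ord \ {0},
    fun α => (fun γ : Ordinal.{0} => γ + 1) '' (Iio α ∪ Iio lam.ord), diff_subset, ?_, ?_, ?_⟩
  · show Cardinal.mk _ = _
    apply le_antisymm
    · exact le_of_le_of_eq (Cardinal.mk_le_mk_of_subset diff_subset) hIio
    · rw [← hIio]
      refine Cardinal.mk_le_of_injective
        (f := fun x : ↥(Iio (Order.succ lam).ord) =>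
          (⟨x.1 + 1, ?_, ?_⟩ : ↥(Iio (Order.succ lam).ord \ {0}))) ?_
      · show x.1 + 1 ∈ Iio _
        rw [mem_Iio, Ordinal.add_one_eq_succ]
        exact hκlim.succ_lt x.2
      · simp only [mem_singleton_iff]
        rw [Ordinal.add_one_eq_succ]
        exact Ordinal.succ_ne_zero _
      · intro a b h
        apply Subtype.ext
        exact succ_add_one_injective (by simpa using congrArg Subtype.val h)
  · intro α hα
    constructor
    · rintro x ⟨γ, hγ, rfl⟩
      have hγκ : γ < (Order.succ lam).ord := by
        rcases hγ with hγ | hγ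
        · exact hγ.trans hα
        · exact hγ.trans (Cardinal.ord_lt_ord.mpr (Order.lt_succ lam))
      show γ + 1 ∈ Iio (Order.succ lam).ord
      rw [mem_Iio, Ordinal.add_one_eq_succ]
      exact hκlim.succ_lt hγκ
    · show Cardinal.mk _ = _
      rw [Cardinal.mk_image_eq succ_add_one_injective]
      have hun : Iio α ∪ Iio lam.ord = Iio (max α lam.ord) := by
        ext x; simp [lt_max_iff]
      rw [hun, Ordinal.mk_Iio_ordinal]
      have hcard : (max α lam.ord).card = lam := by
        apply le_antisymm
        · apply Order.lt_succ_iff.mp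
          apply Cardinal.lt_ord.mp
          exact max_lt hα (Cardinal.ord_lt_ord.mpr (Order.lt_succ lam))
        · calc lam = lam.ord.card := (Cardinal.card_ord lam).symm
          _ ≤ (max α lam.ord).card := Ordinal.card_le_card (le_max_right _ _)
      rw [hcard]
  · intro α hα x hx
    obtain ⟨⟨hxκ, hx0⟩, hxα⟩ := hx
    have hx0' : x ≠ 0 := by simpa using hx0
    have hsucc : x + 1 < (Order.succ lam).ord := by
      rw [Ordinal.add_one_eq_succ]; exact hκlim.succ_lt hxκ
    exact Set.mem_biUnion (⟨x, Or.inl hxα, rfl⟩ :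
      x + 1 ∈ (fun γ : Ordinal.{0} => γ + 1) '' (Iio α ∪ Iio lam.ord))
      (mem_of_succ hC hx0' hsucc)

/-- Existence of a thin cofinal subset of a limit ordinal of small cardinality. -/
lemma exists_thin (lam : Cardinal.{0}) {β : Ordinal.{0}} (hβ : Order.IsSuccLimit β) (hc : β.card ≤ lam) :
    ∃ S : Set Ordinal.{0}, S ⊆ Iio β ∧ sSup S = β ∧
      ∀ y, (∃ s ∈ S, y ≤ s) → Cardinal.mk ↥(S ∩ Iio y) < Cardinal.lift.{1} lam := by
  obtain ⟨f, hf⟩ := Ordinal.exists_fundamental_sequence β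
  refine ⟨{x | ∃ (i : Ordinal.{0}) (hi : i < β.cof.ord), f i hi = x}, ?_, ?_, ?_⟩
  · rintro x ⟨i, hi, rfl⟩; exact hf.lt hi
  · apply le_antisymm
    · exact csSup_le' (by rintro x ⟨i, hi, rfl⟩; exact (hf.lt hi).le)
    · by_contra hlt
      push_neg at hlt
      have hub : Ordinal.blsub _ f ≤ sSup {x | ∃ (i : Ordinal.{0}) (hi : i < β.cof.ord), f i hi = x} + 1 := by
        rw [Ordinal.blsub_le_iff]
        intro i hi
        have hle : f i hi ≤ sSup {x | ∃ (i : Ordinal.{0}) (hi : i < β.cof.ord), f i hi = x} :=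
          le_csSup (bddAbove_of_subset_Iio (by rintro x ⟨i, hi, rfl⟩; exact hf.lt hi)) ⟨i, hi, rfl⟩
        exact lt_of_le_of_lt hle (lt_add_one' _)
      rw [hf.blsub_eq] at hub
      have : sSup {x | ∃ (i : Ordinal.{0}) (hi : i < β.cof.ord), f i hi = x} + 1 < β := by
        rw [Ordinal.add_one_eq_succ]; exact hβ.succ_lt hlt
      exact absurd (hub.trans_lt this) (lt_irrefl β)
  · rintro y ⟨s, ⟨j, hj, rfl⟩, hys⟩
    have hsub : {x | ∃ (i : Ordinal.{0}) (hi : i < β.cof.ord), f i hi = x} ∩ Iio y ⊆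
        Set.range (fun i : ↥(Iio j) => f i.1 (i.2.trans hj)) := by
      rintro x ⟨⟨i, hi, rfl⟩, hxy⟩
      have hij : i < j := by
        by_contra hle
        push_neg at hle
        exact absurd (lt_of_lt_of_le hxy hys) (not_lt.mpr (hf.monotone hj hi hle))
      exact ⟨⟨i, hij⟩, rfl⟩
    calc Cardinal.mk ↥({x | ∃ (i : Ordinal.{0}) (hi : i < β.cof.ord), f i hi = x} ∩ Iio y)
        ≤ Cardinal.mk ↥(Set.range (fun i : ↥(Iio j) => f i.1 (i.2.trans hj))) :=
          Cardinal.mk_le_mk_of_subset hsub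
      _ ≤ Cardinal.mk ↥(Iio j) := Cardinal.mk_range_le
      _ = Cardinal.lift.{1} j.card := Ordinal.mk_Iio_ordinal j
      _ < Cardinal.lift.{1} lam := by
          apply Cardinal.lift_lt.mpr
          exact lt_of_lt_of_le (Cardinal.lt_ord.mp hj) ((Ordinal.cof_le_card β).trans hc)

/-- Existence of a C-sequence over `λ⁺` all of whose clubs are "λ-thin". -/
lemma exists_nice_cseq (lam : Cardinal.{0}) (hlam : Cardinal.aleph0 ≤ lam) :
    ∃ C : Ordinal.{0} → Set Ordinal.{0}, CSeq.IsCSeq (Order.succ lam).ord C ∧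
      ∀ β ∈ Iio (Order.succ lam).ord, ∀ y, (∃ z ∈ C β, y ≤ z) →
        Cardinal.mk ↥(C β ∩ Iio y) < Cardinal.lift.{1} lam := by
  have hex : ∀ β : Ordinal.{0}, ∃ S : Set Ordinal.{0}, Order.IsSuccLimit β → β.card ≤ lam →
      (S ⊆ Iio β ∧ sSup S = β ∧
        ∀ y, (∃ s ∈ S, y ≤ s) → Cardinal.mk ↥(S ∩ Iio y) < Cardinal.lift.{1} lam) := by
    intro β
    by_cases h : Order.IsSuccLimit β ∧ β.card ≤ lam
    · obtain ⟨S, h1, h2, h3⟩ := exists_thin lam h.1 h.2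
      exact ⟨S, fun _ _ => ⟨h1, h2, h3⟩⟩
    · exact ⟨∅, fun h1 h2 => absurd ⟨h1, h2⟩ h⟩
  choose S hS using hex
  classical
  set A : Ordinal.{0} → Set Ordinal.{0} :=
    fun β => {α | α < β ∧ 0 < α ∧ sSup (S β ∩ Iio α) = α} with hAdef
  refine ⟨fun β => if Order.IsSuccLimit β then S β ∪ A β else {x | x + 1 = β}, ?_, ?_⟩
  · intro β hβ
    have hcard : β.card ≤ lam := Order.lt_succ_iff.mp (Cardinal.lt_ord.mp hβ)
    by_cases hlim : Order.IsSuccLimit β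
    · obtain ⟨hS1, hS2, _⟩ := hS β hlim hcard
      have hSne : (S β).Nonempty := by
        by_contra h
        rw [Set.not_nonempty_iff_eq_empty] at h
        rw [h, csSup_empty] at hS2
        simp only [Ordinal.bot_eq_zero] at hS2
        exact hlim.pos.ne' hS2.symm
      simp only [if_pos hlim]
      refine ⟨?_, ?_, ?_⟩
      · rintro x (hx | hx)
        · exact hS1 hx
        · exact hx.1
      · intro α hαβ h0 hsup
        have key : sSup (S β ∩ Iio α) = α := by
          apply le_antisymm
          · exact csSup_le' fun x hx => hx.2.le
          · conv_lhs => rw [← hsup]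
            apply csSup_le'
            rintro x ⟨hx, hxα⟩
            rcases hx with hxS | hxA
            · exact le_csSup (bddAbove_of_subset_Iio fun z hz => hz.2) ⟨hxS, hxα⟩
            · conv_lhs => rw [← hxA.2.2]
              apply csSup_le'
              rintro z ⟨hzS, hzx⟩
              exact le_csSup (bddAbove_of_subset_Iio fun w hw => hw.2) (mem_inter hzS (mem_Iio.mpr (lt_trans (mem_Iio.mp hzx) (mem_Iio.mp hxα))))
        exact Or.inr ⟨hαβ, h0, key⟩
      · rw [sSup_Iio_limit hlim]
        apply le_antisymm
        · apply csSup_le'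
          rintro x (hx | hx)
          · exact (hS1 hx).le
          · exact hx.1.le
        · conv_lhs => rw [← hS2]
          refine csSup_le_csSup (bddAbove_of_subset_Iio (β := β) ?_) hSne subset_union_left
          rintro x (hx | hx)
          · exact hS1 hx
          · exact hx.1
    · simp only [if_neg hlim]
      rcases Ordinal.zero_or_succ_or_isSuccLimit β with h0 | ⟨γ, rfl⟩ | hl
      · subst h0
        refine ⟨?_, ?_, ?_⟩
        · intro x hx
          exact absurd hx (by simp [Ordinal.succ_ne_zero])
        · intro α hα _ _
          exact absurd hα (not_lt_of_ge (zero_le (a := α)))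
        · have h1 : {x : Ordinal.{0} | x + 1 = 0} = ∅ := by
            ext x; simp [Ordinal.succ_ne_zero]
          have h2 : (Iio (0 : Ordinal.{0})) = ∅ := by
            ext x; simp [not_lt_of_ge (zero_le (a := x))]
          rw [h1, h2]
      · have hset : {x : Ordinal.{0} | x + 1 = Order.succ γ} = {γ} := by
          ext x
          simp only [mem_setOf_eq, mem_singleton_iff, Ordinal.add_one_eq_succ,
            Order.succ_eq_succ_iff]
        rw [hset]
        refine ⟨?_, ?_, ?_⟩
        · intro x hx
          rw [mem_singleton_iff] at hx
          subst hx
          exact Order.lt_succ x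
        · intro α hα h0 hsup
          by_cases hγα : γ < α
          · have : ({γ} : Set Ordinal.{0}) ∩ Iio α = {γ} :=
              inter_eq_self_of_subset_left (by simpa using hγα)
            rw [this, csSup_singleton] at hsup
            exact absurd hsup (ne_of_lt hγα)
          · have : ({γ} : Set Ordinal.{0}) ∩ Iio α = ∅ := by
              ext x; simp only [mem_inter_iff, mem_singleton_iff, mem_Iio, mem_empty_iff_false,
                iff_false, not_and]
              rintro rfl; exact hγα
            rw [this, csSup_empty] at hsup
            simp only [Ordinal.bot_eq_zero] at hsup
            exact absurd hsup.symm h0.ne'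
        · rw [csSup_singleton, Order.Iio_succ, csSup_Iic]
      · exact absurd hl hlim
  · intro β hβ y hzy
    obtain ⟨z, hzC, hyz⟩ := hzy
    have hcard : β.card ≤ lam := Order.lt_succ_iff.mp (Cardinal.lt_ord.mp hβ)
    by_cases hlim : Order.IsSuccLimit β
    · simp only [if_pos hlim] at hzC ⊢
      obtain ⟨hS1, hS2, hS3⟩ := hS β hlim hcard
      have hmemS : ∀ w, w < β → ∃ s ∈ S β, w ≤ s := by
        intro w hw
        by_contra h
        push_neg at h
        have hle : sSup (S β) ≤ w := csSup_le' fun s hs => (h s hs).le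
        rw [hS2] at hle
        exact absurd (hw.trans_le hle) (lt_irrefl w)
      have hzβ : z < β := by
        rcases hzC with hz | hz
        · exact hS1 hz
        · exact hz.1
      have hSy : Cardinal.mk ↥(S β ∩ Iio y) < Cardinal.lift.{1} lam :=
        hS3 y (hmemS y (hyz.trans_lt hzβ))
      set g : Ordinal.{0} → Ordinal.{0} := fun α => sInf {s | s ∈ S β ∧ α ≤ s} with hgdef
      have hgmem : ∀ α, α < β → g α ∈ S β ∧ α ≤ g α := by
        intro α hα
        obtain ⟨s, hs, hαs⟩ := hmemS α hα
        exact csInf_mem (⟨s, hs, hαs⟩ : {s | s ∈ S β ∧ α ≤ s}.Nonempty)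
      have hglt : ∀ α₁ ∈ A β, ∀ α₂ ∈ A β, α₁ < α₂ → g α₁ < α₂ := by
        intro α₁ h₁ α₂ h₂ hlt
        obtain ⟨s, hsS, hα₁s, hsα₂⟩ : ∃ s, s ∈ S β ∧ α₁ ≤ s ∧ s < α₂ := by
          by_contra h
          push_neg at h
          have hle : sSup (S β ∩ Iio α₂) ≤ α₁ := by
            apply csSup_le'
            rintro s ⟨hs, hslt⟩
            by_contra hh
            push_neg at hh
            exact absurd hslt (not_lt.mpr (h s hs hh.le))
          rw [h₂.2.2] at hle
          exact absurd hle (not_le.mpr hlt)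
        exact lt_of_le_of_lt (csInf_le' ⟨hsS, hα₁s⟩) hsα₂
      have hginj : Set.InjOn g (A β ∩ Iio y) := by
        intro a ha b hb hab
        rcases lt_trichotomy a b with h | h | h
        · exfalso
          have h1 : g a < b := hglt a ha.1 b hb.1 h
          have h2 : b ≤ g b := (hgmem b hb.1.1).2
          rw [← hab] at h2
          exact absurd h2 (not_le.mpr h1)
        · exact h
        · exfalso
          have h1 : g b < a := hglt b hb.1 a ha.1 h
          have h2 : a ≤ g a := (hgmem a ha.1.1).2
          rw [hab] at h2
          exact absurd h2 (not_le.mpr h1)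
      have himg : g '' (A β ∩ Iio y) ⊆ (S β ∩ Iio y) ∪ (g '' (A β ∩ Iio y) \ Iio y) := by
        rintro x ⟨a, ha, rfl⟩
        by_cases hxy : g a < y
        · exact Or.inl ⟨(hgmem a ha.1.1).1, hxy⟩
        · exact Or.inr ⟨⟨a, ha, rfl⟩, hxy⟩
      have hEsub : (g '' (A β ∩ Iio y) \ Iio y).Subsingleton := by
        rintro x₁ ⟨⟨a₁, ha₁, rfl⟩, hx₁⟩ x₂ ⟨⟨a₂, ha₂, rfl⟩, hx₂⟩
        rcases lt_trichotomy a₁ a₂ with h | h | h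
        · exact absurd (mem_Iio.mpr ((hglt _ ha₁.1 _ ha₂.1 h).trans ha₂.2)) hx₁
        · rw [h]
        · exact absurd (mem_Iio.mpr ((hglt _ ha₂.1 _ ha₁.1 h).trans ha₁.2)) hx₂
      have hone : (1 : Cardinal.{1}) < Cardinal.lift.{1} lam :=
        lt_of_lt_of_le Cardinal.one_lt_aleph0 (Cardinal.aleph0_le_lift.mpr hlam)
      have hAy : Cardinal.mk ↥(A β ∩ Iio y) < Cardinal.lift.{1} lam := by
        calc Cardinal.mk ↥(A β ∩ Iio y) = Cardinal.mk ↥(g '' (A β ∩ Iio y)) :=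
              (Cardinal.mk_image_eq_of_injOn _ _ hginj).symm
          _ ≤ Cardinal.mk ↥((S β ∩ Iio y) ∪ (g '' (A β ∩ Iio y) \ Iio y)) :=
              Cardinal.mk_le_mk_of_subset himg
          _ ≤ Cardinal.mk ↥(S β ∩ Iio y) + Cardinal.mk ↥(g '' (A β ∩ Iio y) \ Iio y) :=
              Cardinal.mk_union_le _ _
          _ < Cardinal.lift.{1} lam :=
              Cardinal.add_lt_of_lt (Cardinal.aleph0_le_lift.mpr hlam) hSy
                (lt_of_le_of_lt (Cardinal.mk_le_one_iff_set_subsingleton.mpr hEsub) hone)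
      have hsplit : (S β ∪ A β) ∩ Iio y = (S β ∩ Iio y) ∪ (A β ∩ Iio y) :=
        union_inter_distrib_right _ _ _
      rw [hsplit]
      calc Cardinal.mk ↥((S β ∩ Iio y) ∪ (A β ∩ Iio y))
          ≤ Cardinal.mk ↥(S β ∩ Iio y) + Cardinal.mk ↥(A β ∩ Iio y) := Cardinal.mk_union_le _ _
        _ < Cardinal.lift.{1} lam :=
            Cardinal.add_lt_of_lt (Cardinal.aleph0_le_lift.mpr hlam) hSy hAy
    · simp only [if_neg hlim] at hzC ⊢
      have hsub : ({x : Ordinal.{0} | x + 1 = β} ∩ Iio y).Subsingleton := by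
        rintro a ⟨ha, _⟩ b ⟨hb, _⟩
        exact succ_add_one_injective (show a + 1 = b + 1 by rw [ha, hb])
      exact lt_of_le_of_lt (Cardinal.mk_le_one_iff_set_subsingleton.mpr hsub)
        (lt_of_lt_of_le Cardinal.one_lt_aleph0 (Cardinal.aleph0_le_lift.mpr hlam))

lemma small_biUnion {lam χ : Cardinal.{0}} (hlam : Cardinal.aleph0 ≤ lam) (hχ : χ < lam.ord.cof)
    {I : Set Ordinal.{0}} (hI : Cardinal.mk ↥I ≤ Cardinal.lift.{1} χ)
    {t : Ordinal.{0} → Set Ordinal.{0}}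
    (ht : ∀ β ∈ I, Cardinal.mk ↥(t β) < Cardinal.lift.{1} lam) :
    Cardinal.mk ↥(⋃ β ∈ I, t β) < Cardinal.lift.{1} lam := by
  have hχlam : χ < lam := lt_of_lt_of_le hχ ((Ordinal.cof_le_card _).trans_eq (Cardinal.card_ord lam))
  have hcof : (Cardinal.lift.{1} lam).ord.cof = Cardinal.lift.{1} lam.ord.cof := by
    rw [← Cardinal.lift_ord, ← Ordinal.lift_cof]
  have hsup : (⨆ x : ↥I, Cardinal.mk ↥(t x.1)) < Cardinal.lift.{1} lam := by
    refine Ordinal.iSup_lt_lift.{1,1} ?_ fun i => ht i.1 i.2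
    rw [hcof]
    simpa using lt_of_le_of_lt hI (Cardinal.lift_lt.mpr hχ)
  calc Cardinal.mk ↥(⋃ β ∈ I, t β) ≤ Cardinal.mk ↥I * ⨆ x : ↥I, Cardinal.mk ↥(t x.1) :=
        Cardinal.mk_biUnion_le _ _
    _ < Cardinal.lift.{1} lam :=
        Cardinal.mul_lt_of_lt (Cardinal.aleph0_le_lift.mpr hlam)
          (lt_of_le_of_lt hI (Cardinal.lift_lt.mpr hχlam)) hsup

end Statement2Aux


theorem statement2 (lam : Cardinal.{0}) (hlam : Cardinal.aleph0 ≤ lam) :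
    lam.ord.cof ≤ chiNum (Order.succ lam) ∧ chiNum (Order.succ lam) ≤ lam ∧
      (lam.IsRegular → chiNum (Order.succ lam) = lam) := by
  open Statement2Aux Cardinal in
  have hκinf : Cardinal.aleph0 ≤ Order.succ lam := hlam.trans (Order.le_succ lam)
  have hmem : lam ∈ {χ : Cardinal.{0} | χ ≤ Order.succ lam ∧
      ∀ C, IsCSeq (Order.succ lam).ord C →
        CSeqCovers (Order.succ lam) (Iio (Order.succ lam).ord) C χ} :=
    ⟨Order.le_succ lam, Statement2Aux.covers_lam lam hlam⟩
  have hub : chiNum (Order.succ lam) ≤ lam := csInf_le' hmem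
  have hlb : lam.ord.cof ≤ chiNum (Order.succ lam) := by
    apply le_csInf ⟨lam, hmem⟩
    rintro χ ⟨hχκ, hcov⟩
    by_contra hcon
    push_neg at hcon
    obtain ⟨C, hC, hKprop⟩ := Statement2Aux.exists_nice_cseq lam hlam
    obtain ⟨Δ, b, hΔsub, hΔmk, hb, hcover⟩ := hcov C hC
    have hκlim : Order.IsSuccLimit (Order.succ lam).ord := Cardinal.isSuccLimit_ord hκinf
    -- the enumeration of Δ
    have hubdd : ¬ BddAbove (Δ ∪ Ici (Order.succ lam).ord) := by
      rintro ⟨x, hx⟩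
      have h1 : max (Order.succ lam).ord x + 1 ∈ Δ ∪ Ici (Order.succ lam).ord :=
        Or.inr ((le_max_left _ _).trans (Statement2Aux.lt_add_one' _).le)
      exact absurd (hx h1)
        (not_le.mpr ((le_max_right (Order.succ lam).ord x).trans_lt
          (Statement2Aux.lt_add_one' _)))
    set e := Ordinal.enumOrd (Δ ∪ Ici (Order.succ lam).ord) with hedef
    have hemono := Ordinal.enumOrd_strictMono hubdd
    have heΔ : ∀ j, j < (Order.succ lam).ord → e j ∈ Δ := by
      intro j hj
      by_contra hne
      have hmem' : e j ∈ Δ ∪ Ici (Order.succ lam).ord := Ordinal.enumOrd_mem hubdd j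
      have hKe : (Order.succ lam).ord ≤ e j := hmem'.resolve_left hne
      have hΔsm : Δ ⊆ e '' Iio j := by
        intro d hd
        have hdr : d ∈ Set.range e := by
          rw [hedef, Ordinal.range_enumOrd hubdd]; exact Or.inl hd
        obtain ⟨i, rfl⟩ := hdr
        exact ⟨i, hemono.lt_iff_lt.mp ((hΔsub hd).trans_le hKe), rfl⟩
      have hjlam : j.card ≤ lam := Order.lt_succ_iff.mp (Cardinal.lt_ord.mp hj)
      have h3 : Cardinal.lift.{1} (Order.succ lam) ≤ Cardinal.lift.{1} lam := by
        calc Cardinal.lift.{1} (Order.succ lam) = Cardinal.mk ↥Δ := hΔmk.symm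
          _ ≤ Cardinal.mk ↥(e '' Iio j) := Cardinal.mk_le_mk_of_subset hΔsm
          _ ≤ Cardinal.mk ↥(Iio j) := Cardinal.mk_image_le
          _ = Cardinal.lift.{1} j.card := Ordinal.mk_Iio_ordinal j
          _ ≤ Cardinal.lift.{1} lam := Cardinal.lift_le.mpr hjlam
      exact absurd (Cardinal.lift_le.mp h3) (not_le.mpr (Order.lt_succ lam))
    have hLLK : lam.ord * lam.ord < (Order.succ lam).ord := by
      rw [Cardinal.lt_ord, Ordinal.card_mul, Cardinal.card_ord, Cardinal.mul_eq_self hlam]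
      exact Order.lt_succ lam
    set α := e (lam.ord * lam.ord) + 1 with hαdef
    have hαK : α < (Order.succ lam).ord := by
      rw [hαdef, Ordinal.add_one_eq_succ]
      exact hκlim.succ_lt (hΔsub (heΔ _ hLLK))
    obtain ⟨hbsub, hbmk⟩ := hb α hαK
    have hcov' := hcover α hαK
    set T : Ordinal.{0} → Set Ordinal.{0} :=
      fun ξ => (fun i => e (lam.ord * ξ + i)) '' Iio lam.ord with hTdef
    have hTinj : ∀ ξ, Function.Injective (fun i => e (lam.ord * ξ + i)) := by
      intro ξ a b h
      have h2 : lam.ord * ξ + a = lam.ord * ξ + b := hemono.injective h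
      exact (add_right_inj _).mp h2
    have hTmk : ∀ ξ, Cardinal.mk ↥(T ξ) = Cardinal.lift.{1} lam := by
      intro ξ
      rw [hTdef]
      rw [Cardinal.mk_image_eq (hTinj ξ), Ordinal.mk_Iio_ordinal, Cardinal.card_ord]
    have hidx : ∀ ξ, ξ < lam.ord → ∀ i, i < lam.ord → lam.ord * ξ + i < lam.ord * lam.ord := by
      intro ξ hξ i hi
      calc lam.ord * ξ + i < lam.ord * ξ + lam.ord := add_lt_add_right hi _
        _ = lam.ord * Order.succ ξ := (Ordinal.mul_succ _ _).symm
        _ ≤ lam.ord * lam.ord := mul_le_mul_right (Order.succ_le_of_lt hξ) _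
    have hTsub : ∀ ξ, ξ < lam.ord → T ξ ⊆ Δ ∩ Iio α := by
      rintro ξ hξ x ⟨i, hi, rfl⟩
      have hidx' := hidx ξ hξ i hi
      refine ⟨heΔ _ (hidx'.trans hLLK), ?_⟩
      calc e (lam.ord * ξ + i) < e (lam.ord * lam.ord) := hemono hidx'
        _ < α := Statement2Aux.lt_add_one' _
    have hpick : ∀ ξ, ξ < lam.ord →
        ∃ β ∈ b α, ¬ (Cardinal.mk ↥(C β ∩ T ξ) < Cardinal.lift.{1} lam) := by
      intro ξ hξ
      by_contra h
      push_neg at h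
      have hsub2 : T ξ ⊆ ⋃ β ∈ b α, (C β ∩ T ξ) := by
        intro x hx
        obtain ⟨β, hβ, hxC⟩ := Set.mem_iUnion₂.mp (hcov' (hTsub ξ hξ hx))
        exact Set.mem_biUnion hβ ⟨hxC, hx⟩
      have hlt := (Cardinal.mk_le_mk_of_subset hsub2).trans_lt
        (Statement2Aux.small_biUnion hlam hcon (le_of_eq hbmk) h)
      rw [hTmk ξ] at hlt
      exact lt_irrefl _ hlt
    choose F hF1 hF2 using fun ξ : ↥(Iio lam.ord) => hpick ξ.1 ξ.2
    have hninj : ¬ Function.Injective F := by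
      intro hinj
      have hemb : Cardinal.mk ↥(Iio lam.ord) ≤ Cardinal.mk ↥(b α) :=
        Cardinal.mk_le_of_injective (f := fun ξ => (⟨F ξ, hF1 ξ⟩ : ↥(b α)))
          (fun a b h => hinj (congrArg Subtype.val h))
      rw [Ordinal.mk_Iio_ordinal, Cardinal.card_ord, hbmk] at hemb
      have hlc : lam ≤ χ := Cardinal.lift_le.mp hemb
      exact absurd ((hlc.trans_lt hcon).trans_le
        ((Ordinal.cof_le_card _).trans_eq (Cardinal.card_ord lam))) (lt_irrefl lam)
    obtain ⟨ξ₁, ξ₂, hlt12, hFeq⟩ : ∃ ξ₁ ξ₂ : ↥(Iio lam.ord), ξ₁.1 < ξ₂.1 ∧ F ξ₁ = F ξ₂ := by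
      rw [Function.not_injective_iff] at hninj
      obtain ⟨a, b', hab, hne⟩ := hninj
      rcases lt_trichotomy a.1 b'.1 with h | h | h
      · exact ⟨a, b', h, hab⟩
      · exact absurd (Subtype.ext h) hne
      · exact ⟨b', a, h, hab.symm⟩
    have hsep : T ξ₁.1 ⊆ Iio (e (lam.ord * ξ₂.1)) := by
      rintro x ⟨i, hi, rfl⟩
      apply hemono
      calc lam.ord * ξ₁.1 + i < lam.ord * ξ₁.1 + lam.ord :=
            add_lt_add_right hi _
        _ = lam.ord * Order.succ ξ₁.1 := (Ordinal.mul_succ _ _).symm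
        _ ≤ lam.ord * ξ₂.1 := mul_le_mul_right (Order.succ_le_of_lt hlt12) _
    have hbig : ¬ Cardinal.mk ↥(C (F ξ₂) ∩ Iio (e (lam.ord * ξ₂.1))) < Cardinal.lift.{1} lam := by
      intro hsmall
      apply hF2 ξ₁
      refine (Cardinal.mk_le_mk_of_subset ?_).trans_lt hsmall
      rw [hFeq]
      exact fun x hx => ⟨hx.1, hsep hx.2⟩
    have hsub3 : ∀ z ∈ C (F ξ₂), z < e (lam.ord * ξ₂.1) := by
      by_contra h
      push_neg at h
      obtain ⟨z, hz, hyz⟩ := h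
      exact hbig (hKprop (F ξ₂) (hbsub (hF1 ξ₂)) (e (lam.ord * ξ₂.1)) ⟨z, hz, hyz⟩)
    have hne2 : (C (F ξ₂) ∩ T ξ₂.1).Nonempty := by
      rcases Set.eq_empty_or_nonempty (C (F ξ₂) ∩ T ξ₂.1) with h | h
      · exfalso
        apply hF2 ξ₂
        rw [h]
        simp only [Cardinal.mk_emptyCollection]
        exact lt_of_lt_of_le Cardinal.aleph0_pos (Cardinal.aleph0_le_lift.mpr hlam)
      · exact h
    obtain ⟨z, hzC, hzT⟩ := hne2
    obtain ⟨i, hi, rfl⟩ := hzT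
    have hge : e (lam.ord * ξ₂.1) ≤ e (lam.ord * ξ₂.1 + i) :=
      hemono.monotone (le_self_add)
    exact absurd (hsub3 _ hzC) (not_lt.mpr hge)
  exact ⟨hlb, hub, fun hreg => le_antisymm hub (le_of_eq_of_le hreg.cof_eq.symm hlb)⟩


end CSeq
end
end

section
/- Let κ be a regular uncountable cardinal and suppose that for every C-sequence ⟨C_β : β < κ⟩ over κ there exist Δ ∈ [κ]^κ and b : κ → κ such that Δ ∩ α ⊆ C_{b(α)} for all α < κ (i.e., χ(κ) ≤ 1). Then for every sequence ⟨S_i : i < κ⟩ of stationary subsets of κ there exists a weakly inaccessible cardinal β < κ such that S_i ∩ β is stationary in β for all i < β. -/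
noncomputable section

open Set

namespace CSeq

/- ===== auxiliary lemmas added for the proof ===== -/

lemma bddAbove_of_subset_Iio {s : Set Ordinal.{0}} {b : Ordinal.{0}} (h : s ⊆ Iio b) :
    BddAbove s := ⟨b, fun _ hx => (h hx).le⟩

lemma nonempty_of_sSup_pos {s : Set Ordinal.{0}} {x : Ordinal.{0}} (h : sSup s = x)
    (hx : 0 < x) : s.Nonempty := by
  by_contra hc
  rw [Set.not_nonempty_iff_eq_empty] at hc
  rw [hc, csSup_empty] at h
  exact absurd h.symm hx.ne'

lemma succ_not_limit (i : Ordinal.{0}) : ¬ Order.IsSuccLimit (i + 1) := by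
  rw [Ordinal.add_one_eq_succ]; exact Order.not_isSuccLimit_succ i

lemma lt_add_one_self (i : Ordinal.{0}) : i < i + 1 := by
  rw [Ordinal.add_one_eq_succ]; exact Order.lt_succ i

lemma add_one_lt_of_limit {o i : Ordinal.{0}} (h : Order.IsSuccLimit o) (hi : i < o) : i + 1 < o := by
  rw [Ordinal.add_one_eq_succ]; exact h.succ_lt hi

lemma sSup_eq_of_unbounded {s : Set Ordinal.{0}} {b : Ordinal.{0}} (hb : Order.IsSuccLimit b)
    (hsub : s ⊆ Iio b) (hunb : ∀ γ < b, ∃ x ∈ s, γ ≤ x) : sSup s = b := by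
  obtain ⟨x0, hx0, _⟩ := hunb 0 hb.pos
  apply le_antisymm
  · exact csSup_le ⟨x0, hx0⟩ fun x hx => (hsub hx).le
  · by_contra hc
    push_neg at hc
    obtain ⟨x, hx, hge⟩ := hunb _ (hb.succ_lt hc)
    exact absurd (le_csSup (bddAbove_of_subset_Iio hsub) hx)
      (not_le.2 (lt_of_lt_of_le (Order.lt_succ _) hge))

lemma sSup_Iio_limit {b : Ordinal.{0}} (hb : Order.IsSuccLimit b) : sSup (Iio b) = b :=
  sSup_eq_of_unbounded hb (fun _ hx => hx) (fun γ hγ => ⟨γ, hγ, le_rfl⟩)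

lemma sSup_Iio_succ (b : Ordinal.{0}) : sSup (Iio (b + 1)) = b := by
  apply le_antisymm
  · refine csSup_le ⟨b, lt_add_one_self b⟩ fun x hx => ?_
    have : x < b + 1 := hx
    rw [Ordinal.add_one_eq_succ, Order.lt_succ_iff] at this
    exact this
  · exact le_csSup (bddAbove_of_subset_Iio (fun x hx => hx)) (lt_add_one_self b)

lemma le_self_of_strictMonoOn {f : Ordinal.{0} → Ordinal.{0}} {m : Ordinal.{0}}
    (h : StrictMonoOn f (Iic m)) : m ≤ f m := by
  have key : ∀ ξ, ξ ≤ m → ξ ≤ f ξ := by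
    intro ξ
    induction ξ using Ordinal.induction with
    | h ξ ih =>
      intro hξm
      by_contra hc
      push_neg at hc
      have hfm : f ξ ≤ m := (hc.trans_le hξm).le
      exact absurd (ih (f ξ) hc hfm) (not_le.2 (h hfm hξm hc))
  exact key m le_rfl

noncomputable def myEnum (A : Set Ordinal.{0}) (ξ : Ordinal.{0}) : Ordinal.{0} :=
  sInf {a | a ∈ A ∧ ∀ η, ∀ _ : η < ξ, myEnum A η < a}
termination_by ξ
decreasing_by exact ‹_›

lemma myEnum_spec {κ : Cardinal.{0}} (hreg : κ.IsRegular) {A : Set Ordinal.{0}}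
    (hA : ∀ γ < κ.ord, ∃ x ∈ A, γ < x ∧ x < κ.ord) :
    ∀ ξ, ξ < κ.ord → (myEnum A ξ ∈ A ∧ myEnum A ξ < κ.ord ∧
      ∀ η, η < ξ → myEnum A η < myEnum A ξ) := by
  intro ξ
  induction ξ using Ordinal.induction with
  | h ξ ih =>
    intro hξ
    have hlim : Order.IsSuccLimit κ.ord := Cardinal.isSuccLimit_ord hreg.aleph0_le
    have hbs : Ordinal.bsup ξ (fun η _ => myEnum A η + 1) < κ.ord := by
      apply Ordinal.bsup_lt_ord
      · rw [hreg.cof_eq]; exact Cardinal.lt_ord.1 hξ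
      · intro η hη
        exact add_one_lt_of_limit hlim (ih η hη (hη.trans hξ)).2.1
    obtain ⟨x, hxA, hgt, hxκ⟩ := hA _ hbs
    have hxT : x ∈ {a | a ∈ A ∧ ∀ η, ∀ _ : η < ξ, myEnum A η < a} := by
      refine ⟨hxA, fun η hη => ?_⟩
      calc myEnum A η < myEnum A η + 1 := lt_add_one_self _
        _ ≤ Ordinal.bsup ξ (fun η _ => myEnum A η + 1) := Ordinal.le_bsup _ η hη
        _ < x := hgt
    have hmem : myEnum A ξ ∈ {a | a ∈ A ∧ ∀ η, ∀ _ : η < ξ, myEnum A η < a} := by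
      rw [myEnum]
      exact csInf_mem ⟨x, hxT⟩
    refine ⟨hmem.1, ?_, fun η hη => hmem.2 η hη⟩
    have : myEnum A ξ ≤ x := by rw [myEnum]; exact csInf_le (OrderBot.bddBelow _) hxT
    exact this.trans_lt hxκ

lemma unbounded_of_mkEq {Δ : Set Ordinal.{0}} {κ : Cardinal.{0}} (hκ : Cardinal.aleph0 ≤ κ)
    (hsub : Δ ⊆ Iio κ.ord) (hmk : MkEq Δ κ) : ∀ γ < κ.ord, ∃ x ∈ Δ, γ < x ∧ x < κ.ord := by
  intro γ hγ
  by_contra hc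
  push_neg at hc
  have hsub2 : Δ ⊆ Iio (γ + 1) := by
    intro x hx
    rcases lt_or_ge γ x with hlt | hle
    · exact absurd (hc x hx hlt) (not_le.2 (hsub hx))
    · show x < γ + 1
      rw [Ordinal.add_one_eq_succ, Order.lt_succ_iff]
      exact hle
  have h1 : Cardinal.mk Δ ≤ Cardinal.mk (Iio (γ + 1)) := Cardinal.mk_le_mk_of_subset hsub2
  rw [Ordinal.mk_Iio_ordinal] at h1
  unfold MkEq at hmk
  rw [hmk] at h1
  have h2 : κ ≤ (γ + 1).card := Cardinal.lift_le.1 h1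
  have h3 : (γ + 1) < κ.ord := add_one_lt_of_limit (Cardinal.isSuccLimit_ord hκ) hγ
  exact absurd h2 (not_le.2 (Cardinal.lt_ord.1 h3))

lemma exists_acc {κ : Cardinal.{0}} (hreg : κ.IsRegular) (hunc : Cardinal.aleph0 < κ)
    {X : Set Ordinal.{0}}
    (hX : ∀ γ < κ.ord, ∃ x ∈ X, γ < x ∧ x < κ.ord) :
    ∀ γ < κ.ord, ∃ α, γ < α ∧ α < κ.ord ∧ 0 < α ∧ sSup (X ∩ Iio α) = α := by
  intro γ hγ
  classical
  let w : Ordinal.{0} → Ordinal.{0} := fun δ =>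
    if h : δ < κ.ord then (hX δ h).choose else 0
  have hw : ∀ δ, δ < κ.ord → w δ ∈ X ∧ δ < w δ ∧ w δ < κ.ord := by
    intro δ hδ
    have := (hX δ hδ).choose_spec
    simp only [w, dif_pos hδ]
    exact ⟨this.1, this.2.1, this.2.2⟩
  let f : ℕ → Ordinal.{0} := fun n => Nat.rec (w γ) (fun _ a => w a) n
  have hf : ∀ n, f n ∈ X ∧ f n < κ.ord ∧ γ < f n := by
    intro n
    induction n with
    | zero => exact ⟨(hw γ hγ).1, (hw γ hγ).2.2, (hw γ hγ).2.1⟩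
    | succ n ih =>
      have h2 := hw (f n) ih.2.1
      exact ⟨h2.1, h2.2.2, ih.2.2.trans h2.2.1⟩
  have hmono : ∀ n, f n < f (n + 1) := fun n => (hw (f n) (hf n).2.1).2.1
  set α := iSup f with hα
  have hfle : ∀ n, f n ≤ α := fun n => Ordinal.le_iSup f n
  have hflt : ∀ n, f n < α := fun n => lt_of_lt_of_le (hmono n) (hfle (n + 1))
  have hακ : α < κ.ord := by
    apply Ordinal.iSup_lt_ord _ (fun n => (hf n).2.1)
    rw [hreg.cof_eq, Cardinal.mk_denumerable]
    exact hunc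
  refine ⟨α, lt_of_lt_of_le (hf 0).2.2 (hfle 0), hακ, ?_, ?_⟩
  · exact lt_of_le_of_lt zero_le (lt_of_lt_of_le (hf 0).2.2 (hfle 0))
  · apply le_antisymm
    · exact csSup_le ⟨f 0, (hf 0).1, hflt 0⟩ fun x hx => hx.2.le
    · exact Ordinal.iSup_le fun n =>
        le_csSup (bddAbove_of_subset_Iio (fun x hx => hx.2)) ⟨(hf n).1, hflt n⟩

lemma exists_small_club {β : Ordinal.{0}} (hlim : Order.IsSuccLimit β) (hsing : β.cof.ord < β) :
    ∃ (E : Set Ordinal.{0}) (q : Ordinal.{0} → Ordinal.{0}),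
      E ⊆ Iio β ∧ (∀ γ < β, ∃ x ∈ E, γ ≤ x) ∧ IsClosedIn E β ∧
      (∀ x ∈ E, β.cof.ord < x) ∧ StrictMonoOn q E ∧ (∀ x ∈ E, q x < β.cof.ord) := by
  classical
  set ξ := β.cof.ord with hξdef
  have hξlim : Order.IsSuccLimit ξ := Cardinal.isSuccLimit_ord (Ordinal.aleph0_le_cof.2 hlim)
  obtain ⟨f, hf⟩ := Ordinal.exists_fundamental_sequence β
  let F : Ordinal.{0} → Ordinal.{0} := fun i => if h : i < ξ then f i h else 0
  have hFeq : ∀ i (h : i < ξ), F i = f i h := fun i h => dif_pos h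
  have hFst : ∀ i j, i < ξ → j < ξ → i < j → F i < F j := by
    intro i j hi hj hij
    rw [hFeq i hi, hFeq j hj]
    exact hf.strict_mono hi hj hij
  have hFmono : ∀ i j, i < ξ → j < ξ → i ≤ j → F i ≤ F j := by
    intro i j hi hj hij
    rcases eq_or_lt_of_le hij with rfl | hlt
    · exact le_rfl
    · exact (hFst i j hi hj hlt).le
  have hFlt : ∀ i, i < ξ → F i < β := by
    intro i hi
    rw [hFeq i hi, ← hf.blsub_eq]
    exact Ordinal.lt_blsub _ i hi
  have hFcof : ∀ γ, γ < β → ∃ i, i < ξ ∧ γ ≤ F i := by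
    intro γ hγ
    rw [← hf.blsub_eq, Ordinal.lt_blsub_iff] at hγ
    obtain ⟨i, hi, hle⟩ := hγ
    exact ⟨i, hi, by rw [hFeq i hi]; exact hle⟩
  let e : Ordinal.{0} → Ordinal.{0} := fun i => if Order.IsSuccLimit i then sSup (F '' Iio i) else F i
  have heval_succ : ∀ i, ¬ Order.IsSuccLimit i → e i = F i := fun i h => if_neg h
  have heval_lim : ∀ i, Order.IsSuccLimit i → e i = sSup (F '' Iio i) := fun i h => if_pos h
  have he_le_F : ∀ i, i < ξ → e i ≤ F i := by
    intro i hi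
    by_cases hl : Order.IsSuccLimit i
    · rw [heval_lim i hl]
      refine csSup_le ⟨F 0, 0, hl.pos, rfl⟩ ?_
      rintro x ⟨k, hk, rfl⟩
      exact hFmono k i (hk.trans hi) hi hk.le
    · rw [heval_succ i hl]
  have hest : ∀ i j, i < ξ → j < ξ → i < j → e i < e j := by
    intro i j hi hj hij
    have h1 : e i ≤ F i := he_le_F i hi
    have hsucc : i + 1 ≤ j := by
      rw [Ordinal.add_one_eq_succ, Order.succ_le_iff]
      exact hij
    have hi1 : i + 1 < ξ := lt_of_le_of_lt hsucc hj
    have h2 : F i < F (i + 1) := hFst i (i + 1) hi hi1 (lt_add_one_self i)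
    have h3 : F (i + 1) ≤ e j := by
      rcases eq_or_lt_of_le hsucc with heq | hlt
      · subst heq
        rw [heval_succ _ (succ_not_limit i)]
      · by_cases hl : Order.IsSuccLimit j
        · rw [heval_lim j hl]
          exact le_csSup (bddAbove_of_subset_Iio
            (by rintro x ⟨k, hk, rfl⟩; exact hFlt k (hk.trans hj))) ⟨i + 1, hlt, rfl⟩
        · rw [heval_succ j hl]
          exact hFmono (i + 1) j hi1 hj hlt.le
    exact lt_of_le_of_lt h1 (lt_of_lt_of_le h2 h3)
  have hemono : ∀ i j, i < ξ → j < ξ → i ≤ j → e i ≤ e j := by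
    intro i j hi hj hij
    rcases eq_or_lt_of_le hij with rfl | hlt
    · exact le_rfl
    · exact (hest i j hi hj hlt).le
  have helt : ∀ i, i < ξ → e i < β := fun i hi => lt_of_le_of_lt (he_le_F i hi) (hFlt i hi)
  have hecof : ∀ γ, γ < β → ∃ i, i < ξ ∧ γ ≤ e i := by
    intro γ hγ
    obtain ⟨i, hi, hle⟩ := hFcof γ hγ
    have hi1 : i + 1 < ξ := add_one_lt_of_limit hξlim hi
    refine ⟨i + 1, hi1, ?_⟩
    rw [heval_succ _ (succ_not_limit i)]
    exact hle.trans (hFst i (i + 1) hi hi1 (lt_add_one_self i)).le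
  set Cl := e '' Iio ξ with hCldef
  have hClsub : Cl ⊆ Iio β := by rintro x ⟨k, hk, rfl⟩; exact helt k hk
  have hClclosed : ∀ a, a < β → 0 < a → sSup (Cl ∩ Iio a) = a → a ∈ Cl := by
    intro a ha hapos hsup
    set T := {i | i < ξ ∧ a ≤ e i} with hTdef
    have hTne : T.Nonempty := by
      obtain ⟨i, hi, hle⟩ := hecof a ha
      exact ⟨i, hi, hle⟩
    set i0 := sInf T with hi0def
    have hi0T : i0 ∈ T := csInf_mem hTne
    have hnotT : ∀ k, k < i0 → k < ξ → e k < a := by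
      intro k hk hkξ
      have hknT : k ∉ T := fun hkT =>
        absurd (csInf_le (OrderBot.bddBelow T) hkT) (not_le.2 hk)
      by_contra hc
      exact hknT ⟨hkξ, not_lt.1 hc⟩
    have hkey : Cl ∩ Iio a = e '' Iio i0 := by
      ext x
      constructor
      · rintro ⟨⟨k, hk, rfl⟩, hxa⟩
        refine ⟨k, ?_, rfl⟩
        by_contra hc
        simp only [mem_Iio, not_lt] at hc
        exact absurd (hi0T.2.trans (hemono i0 k hi0T.1 hk hc)) (not_le.2 hxa)
      · rintro ⟨k, hk, rfl⟩
        have hkξ : k < ξ := hk.trans hi0T.1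
        exact ⟨⟨k, hkξ, rfl⟩, hnotT k hk hkξ⟩
    rcases Ordinal.zero_or_succ_or_isSuccLimit i0 with h0 | ⟨j, hj⟩ | hl
    · exfalso
      rw [h0] at hkey
      have hempty : Cl ∩ Iio a = ∅ := by
        rw [hkey]
        have h00 : Iio (0 : Ordinal.{0}) = ∅ := by
          ext x; exact iff_of_false (fun h => not_lt_of_ge zero_le (Set.mem_Iio.1 h)) id
        rw [h00, Set.image_empty]
      rw [hempty, csSup_empty] at hsup
      exact absurd hsup.symm hapos.ne'
    · exfalso
      have hj' : j < i0 := by rw [← hj]; exact Order.lt_succ j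
      have hjξ : j < ξ := hj'.trans hi0T.1
      have hja : e j < a := hnotT j hj' hjξ
      have hub : sSup (Cl ∩ Iio a) ≤ e j := by
        rw [hkey]
        refine csSup_le ⟨e j, j, hj', rfl⟩ ?_
        rintro x ⟨k, hk, rfl⟩
        have hkj : k ≤ j := by
          rw [← hj] at hk
          exact Order.lt_succ_iff.1 hk
        exact hemono k j (lt_of_le_of_lt hkj hjξ) hjξ hkj
      rw [hsup] at hub
      exact absurd hub (not_le.2 hja)
    · have hea : e i0 = a := by
        rw [heval_lim i0 hl]
        apply le_antisymm
        · refine csSup_le ⟨F 0, 0, hl.pos, rfl⟩ ?_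
          rintro x ⟨k, hk, rfl⟩
          have hk1 : k + 1 < i0 := add_one_lt_of_limit hl hk
          have hkξ : k < ξ := hk.trans hi0T.1
          have hk1ξ : k + 1 < ξ := hk1.trans hi0T.1
          have h1 : F k < e (k + 1) := by
            rw [heval_succ _ (succ_not_limit k)]
            exact hFst k (k + 1) hkξ hk1ξ (lt_add_one_self k)
          exact (h1.trans (hnotT (k + 1) hk1 hk1ξ)).le
        · rw [← heval_lim i0 hl]
          exact hi0T.2
      rw [← hea]
      exact ⟨i0, hi0T.1, rfl⟩
  have hξβ1 : ξ + 1 < β := add_one_lt_of_limit hlim hsing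
  refine ⟨Cl ∩ Ioi ξ, fun x => sInf {i | i < ξ ∧ e i = x}, ?_, ?_, ?_, ?_, ?_, ?_⟩
  · intro x hx
    exact hClsub hx.1
  · intro γ hγ
    have hγ' : γ ⊔ (ξ + 1) < β := max_lt hγ hξβ1
    obtain ⟨i, hi, hle⟩ := hecof _ hγ'
    refine ⟨e i, ⟨⟨i, hi, rfl⟩, ?_⟩, (le_max_left _ _).trans hle⟩
    exact lt_of_lt_of_le (lt_add_one_self ξ) ((le_max_right _ _).trans hle)
  · intro a ha hapos hsup
    have hne : (Cl ∩ Ioi ξ ∩ Iio a).Nonempty := by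
      by_contra hc
      rw [Set.not_nonempty_iff_eq_empty] at hc
      rw [hc, csSup_empty] at hsup
      exact absurd hsup.symm hapos.ne'
    obtain ⟨x0, hx0⟩ := hne
    have hxa : ξ < a := lt_trans hx0.1.2 hx0.2
    have hsup2 : sSup (Cl ∩ Iio a) = a := by
      apply le_antisymm
      · exact csSup_le ⟨x0, hx0.1.1, hx0.2⟩ fun x hx => hx.2.le
      · calc a = sSup (Cl ∩ Ioi ξ ∩ Iio a) := hsup.symm
          _ ≤ sSup (Cl ∩ Iio a) :=
            csSup_le_csSup (bddAbove_of_subset_Iio (fun x (hx : x ∈ Cl ∩ Iio a) => hx.2))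
              ⟨x0, hx0⟩ (fun x hx => ⟨hx.1.1, hx.2⟩)
    exact ⟨hClclosed a ha hapos hsup2, hxa⟩
  · intro x hx
    exact hx.2
  · intro x hx y hy hxy
    obtain ⟨kx, hkx, hekx⟩ := hx.1
    obtain ⟨ky, hky, heky⟩ := hy.1
    have hqx : sInf {i | i < ξ ∧ e i = x} ∈ {i | i < ξ ∧ e i = x} :=
      csInf_mem ⟨kx, hkx, hekx⟩
    have hqy : sInf {i | i < ξ ∧ e i = y} ∈ {i | i < ξ ∧ e i = y} :=
      csInf_mem ⟨ky, hky, heky⟩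
    by_contra hc
    push_neg at hc
    have hyx : y ≤ x := by
      rw [← hqx.2, ← hqy.2]
      exact hemono _ _ hqy.1 hqx.1 hc
    exact absurd hxy (not_lt.2 hyx)
  · intro x hx
    obtain ⟨kx, hkx, hekx⟩ := hx.1
    exact (csInf_mem (⟨kx, hkx, hekx⟩ : {i | i < ξ ∧ e i = x}.Nonempty) :
      sInf {i | i < ξ ∧ e i = x} ∈ {i | i < ξ ∧ e i = x}).1

lemma club_tail {Cl : Set Ordinal.{0}} {β i : Ordinal.{0}} (hβlim : Order.IsSuccLimit β) (hiβ : i < β)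
    (hsub : Cl ⊆ Iio β) (hunb : ∀ γ < β, ∃ x ∈ Cl, γ ≤ x) (hcl : IsClosedIn Cl β) :
    (Cl ∩ Ioi i ⊆ Iio β) ∧ (∀ γ < β, ∃ x ∈ Cl ∩ Ioi i, γ ≤ x) ∧
      IsClosedIn (Cl ∩ Ioi i) β := by
  refine ⟨fun x hx => hsub hx.1, ?_, ?_⟩
  · intro γ hγ
    obtain ⟨x, hx, hge⟩ := hunb (γ ⊔ (i + 1)) (max_lt hγ (add_one_lt_of_limit hβlim hiβ))
    exact ⟨x, ⟨hx, lt_of_lt_of_le (lt_add_one_self i) ((le_max_right _ _).trans hge)⟩,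
      (le_max_left _ _).trans hge⟩
  · intro a ha hapos hsup
    have hne : (Cl ∩ Ioi i ∩ Iio a).Nonempty := nonempty_of_sSup_pos hsup hapos
    obtain ⟨x0, hx0⟩ := hne
    have hia : i < a := lt_trans hx0.1.2 hx0.2
    have hsup2 : sSup (Cl ∩ Iio a) = a := by
      apply le_antisymm
      · exact csSup_le ⟨x0, hx0.1.1, hx0.2⟩ fun x hx => hx.2.le
      · calc a = sSup (Cl ∩ Ioi i ∩ Iio a) := hsup.symm
          _ ≤ sSup (Cl ∩ Iio a) :=
            csSup_le_csSup (bddAbove_of_subset_Iio (fun x (hx : x ∈ Cl ∩ Iio a) => hx.2))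
              ⟨x0, hx0⟩ (fun x hx => ⟨hx.1.1, hx.2⟩)
    exact ⟨hcl a ha hapos hsup2, hia⟩

theorem statement6
    (κ : Cardinal.{0}) (hκreg : κ.IsRegular) (hκunc : Cardinal.aleph0 < κ)
    (h : ∀ C, IsCSeq κ.ord C →
      ∃ (Δ : Set Ordinal.{0}) (b : Ordinal.{0} → Ordinal.{0}),
        Δ ⊆ Iio κ.ord ∧ MkEq Δ κ ∧ (∀ α < κ.ord, b α < κ.ord) ∧
        ∀ α < κ.ord, Δ ∩ Iio α ⊆ C (b α))
    (S : Ordinal.{0} → Set Ordinal.{0})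
    (hS : ∀ i < κ.ord, IsStationaryIn (S i) κ.ord) :
    ∃ β < κ.ord, (∃ μ : Cardinal.{0}, μ.ord = β ∧ IsWInaccessible μ) ∧
      ∀ i < β, IsStationaryIn (S i ∩ Iio β) β := by
  by_contra hcon
  push_neg at hcon
  classical
  have hκord : Order.IsSuccLimit κ.ord := Cardinal.isSuccLimit_ord hκreg.aleph0_le
  -- Skolemized failure of reflection at weakly inaccessible points
  have hR : ∀ β : Ordinal.{0}, ∃ (i : Ordinal.{0}) (D : Set Ordinal.{0}),
      (β < κ.ord ∧ Order.IsSuccLimit β ∧ ∃ μ : Cardinal.{0}, μ.ord = β ∧ IsWInaccessible μ) →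
        (i < β ∧ D ⊆ Iio β ∧ (∀ γ < β, ∃ x ∈ D, γ ≤ x) ∧ IsClosedIn D β ∧
          ∀ x ∈ D, i < x ∧ x ∉ S i) := by
    intro β
    by_cases hc : β < κ.ord ∧ Order.IsSuccLimit β ∧ ∃ μ : Cardinal.{0}, μ.ord = β ∧ IsWInaccessible μ
    · obtain ⟨hβκ, hβlim, hμ⟩ := hc
      obtain ⟨i, hiβ, hns⟩ := hcon β hβκ hμ
      unfold IsStationaryIn at hns
      push_neg at hns
      obtain ⟨Cl, hCl, hemp⟩ := hns
      obtain ⟨hClsub, hClunb, hClcl⟩ := hCl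
      obtain ⟨h1, h2, h3⟩ := club_tail hβlim hiβ hClsub hClunb hClcl
      refine ⟨i, Cl ∩ Ioi i, fun _ => ⟨hiβ, h1, h2, h3, ?_⟩⟩
      intro x hx
      refine ⟨hx.2, fun hxS => ?_⟩
      have hmem : x ∈ S i ∩ Iio β ∩ Cl := ⟨⟨hxS, hClsub hx.1⟩, hx.1⟩
      rw [hemp] at hmem
      exact hmem
    · exact ⟨0, ∅, fun hcc => absurd hcc hc⟩
  -- Skolemized predecessor cardinals at regular non-inaccessible points
  have hSC : ∀ β : Ordinal.{0}, ∃ ν : Cardinal.{0},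
      (β < κ.ord ∧ Order.IsSuccLimit β ∧ β.cof.ord = β ∧
        ¬∃ μ : Cardinal.{0}, μ.ord = β ∧ IsWInaccessible μ) →
        (Order.succ ν).ord = β := by
    intro β
    by_cases hc : β < κ.ord ∧ Order.IsSuccLimit β ∧ β.cof.ord = β ∧
        ¬∃ μ : Cardinal.{0}, μ.ord = β ∧ IsWInaccessible μ
    · obtain ⟨hβκ, hβlim, hreg, hno⟩ := hc
      have hal : Cardinal.aleph0 ≤ β.cof := Ordinal.aleph0_le_cof.2 hβlim
      have hμreg : (β.cof).IsRegular := by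
        constructor
        · exact hal
        · rw [hreg]
      have hnl : ¬ Order.IsSuccLimit (β.cof) := fun hl => hno ⟨β.cof, hreg, hμreg, hl⟩
      rw [Order.not_isSuccLimit_iff] at hnl
      rcases hnl with hmin | hnp
      · exfalso
        rw [isMin_iff_eq_bot] at hmin
        rw [hmin] at hal
        have h0 : (⊥ : Cardinal.{0}) = 0 := rfl
        rw [h0] at hal
        exact Cardinal.aleph0_ne_zero (le_antisymm hal zero_le)
      · rw [Order.not_isSuccPrelimit_iff_exists_covBy] at hnp
        obtain ⟨ν, hν⟩ := hnp
        exact ⟨ν, fun _ => by rw [hν.succ_eq]; exact hreg⟩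
    · exact ⟨0, fun hcc => absurd hcc hc⟩
  -- Skolemized small clubs at singular points
  have hSG : ∀ β : Ordinal.{0}, ∃ (E : Set Ordinal.{0}) (q : Ordinal.{0} → Ordinal.{0}),
      (Order.IsSuccLimit β ∧ β.cof.ord < β) → (E ⊆ Iio β ∧ (∀ γ < β, ∃ x ∈ E, γ ≤ x) ∧
        IsClosedIn E β ∧ (∀ x ∈ E, β.cof.ord < x) ∧ StrictMonoOn q E ∧
        ∀ x ∈ E, q x < β.cof.ord) := by
    intro β
    by_cases hc : Order.IsSuccLimit β ∧ β.cof.ord < β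
    · obtain ⟨E, q, hp⟩ := exists_small_club hc.1 hc.2
      exact ⟨E, q, fun _ => hp⟩
    · exact ⟨∅, id, fun hcc => absurd hcc hc⟩
  choose I DD hIDD using hR
  choose NU hNU using hSC
  choose EE QQ hEQ using hSG
  -- the C-sequence
  set C : Ordinal.{0} → Set Ordinal.{0} := fun β =>
    if β < κ.ord ∧ Order.IsSuccLimit β then
      (if ∃ μ : Cardinal.{0}, μ.ord = β ∧ IsWInaccessible μ then DD β
       else if β.cof.ord = β then Ico ((NU β)).ord β
       else EE β)
    else if hσ : ∃ γ, β = γ + 1 then {hσ.choose} else ∅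
    with hCdef
  have hCseq : IsCSeq κ.ord C := by
    intro β hβmem
    have hβκ : β < κ.ord := hβmem
    by_cases hlim : Order.IsSuccLimit β
    · have hCeq : C β =
          (if ∃ μ : Cardinal.{0}, μ.ord = β ∧ IsWInaccessible μ then DD β
           else if β.cof.ord = β then Ico ((NU β)).ord β
           else EE β) := by
        simp only [hCdef]
        rw [if_pos ⟨hβκ, hlim⟩]
      have hclub : C β ⊆ Iio β ∧ (∀ γ < β, ∃ x ∈ C β, γ ≤ x) ∧ IsClosedIn (C β) β := by
        rw [hCeq]
        by_cases h4 : ∃ μ : Cardinal.{0}, μ.ord = β ∧ IsWInaccessible μ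
        · rw [if_pos h4]
          obtain ⟨_, hsub, hunb, hcl, _⟩ := hIDD β ⟨hβκ, hlim, h4⟩
          exact ⟨hsub, hunb, hcl⟩
        · rw [if_neg h4]
          by_cases h5 : β.cof.ord = β
          · rw [if_pos h5]
            have hν := hNU β ⟨hβκ, hlim, h5, h4⟩
            have hνβ : (NU β).ord < β :=
              lt_of_lt_of_eq (Cardinal.ord_lt_ord.2 (Order.lt_succ (NU β))) hν
            refine ⟨fun x hx => hx.2, ?_, ?_⟩
            · intro γ hγ
              exact ⟨γ ⊔ (NU β).ord, ⟨le_max_right _ _, max_lt hγ hνβ⟩, le_max_left _ _⟩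
            · intro a ha hapos hsup
              obtain ⟨x0, hx0⟩ : (Ico (NU β).ord β ∩ Iio a).Nonempty :=
                nonempty_of_sSup_pos hsup hapos
              exact ⟨hx0.1.1.trans hx0.2.le, ha⟩
          · rw [if_neg h5]
            have hp := hEQ β ⟨hlim, lt_of_le_of_ne (Ordinal.ord_cof_le β) h5⟩
            exact ⟨hp.1, hp.2.1, hp.2.2.1⟩
      refine ⟨hclub.1, hclub.2.2, ?_⟩
      rw [sSup_eq_of_unbounded hlim hclub.1 hclub.2.1, sSup_Iio_limit hlim]
    · have hno : ¬(β < κ.ord ∧ Order.IsSuccLimit β) := fun hh => hlim hh.2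
      have hCeq0 : C β = if hσ : ∃ γ, β = γ + 1 then {hσ.choose} else ∅ := by
        simp only [hCdef]
        rw [if_neg hno]
      by_cases hσ : ∃ γ, β = γ + 1
      · have hCeq : C β = {hσ.choose} := by rw [hCeq0, dif_pos hσ]
        have hβeq : β = hσ.choose + 1 := hσ.choose_spec
        refine ⟨?_, ?_, ?_⟩
        · rw [hCeq]
          intro x hx
          rw [mem_singleton_iff] at hx
          subst hx
          exact Set.mem_Iio.2 (lt_of_lt_of_eq (lt_add_one_self _) hβeq.symm)
        · rw [hCeq]
          intro a ha hapos hsup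
          exfalso
          by_cases hga : hσ.choose < a
          · have hss : {hσ.choose} ∩ Iio a = {hσ.choose} := by
              ext x
              simp only [mem_inter_iff, mem_singleton_iff, mem_Iio]
              exact ⟨fun hh => hh.1, fun hh => ⟨hh, hh ▸ hga⟩⟩
            rw [hss, csSup_singleton] at hsup
            rw [hsup] at hga
            exact absurd hga (lt_irrefl a)
          · have hss : {hσ.choose} ∩ Iio a = (∅ : Set Ordinal.{0}) := by
              ext x
              simp only [mem_inter_iff, mem_singleton_iff, mem_Iio, mem_empty_iff_false,
                iff_false, not_and]
              intro hh
              rw [hh]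
              exact fun hlt => hga hlt
            rw [hss, csSup_empty] at hsup
            exact absurd hsup.symm hapos.ne'
        · have h1 : sSup (Iio β) = sSup (Iio (hσ.choose + 1)) :=
            congrArg (fun t => sSup (Iio t)) hβeq
          rw [hCeq, csSup_singleton, h1, sSup_Iio_succ]
      · have hβ0 : β = 0 := by
          rcases Ordinal.zero_or_succ_or_isSuccLimit β with h0 | ⟨a, ha⟩ | hl
          · exact h0
          · exact absurd ⟨a, by rw [← ha, Ordinal.add_one_eq_succ]⟩ hσ
          · exact absurd hl hlim
        have hCeq : C β = (∅ : Set Ordinal.{0}) := by rw [hCeq0, dif_neg hσ]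
        refine ⟨by rw [hCeq]; exact empty_subset _, ?_, ?_⟩
        · rw [hCeq]
          intro a ha
          rw [hβ0] at ha
          exact absurd ha (not_lt_of_ge zero_le)
        · rw [hCeq, hβ0]
          have h00 : Iio (0 : Ordinal.{0}) = ∅ := by
            ext x; exact iff_of_false (fun h => not_lt_of_ge zero_le (Set.mem_Iio.1 h)) id
          rw [h00]
  obtain ⟨Δ, b, hΔsub, hΔmk, hblt, hcov⟩ := h C hCseq
  have hΔunb := unbounded_of_mkEq hκreg.aleph0_le hΔsub hΔmk
  set A : Set Ordinal.{0} := {x | x < κ.ord ∧ 0 < x ∧ sSup (Δ ∩ Iio x) = x} with hAdef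
  have hAunb : ∀ γ < κ.ord, ∃ x ∈ A, γ < x ∧ x < κ.ord := by
    intro γ hγ
    obtain ⟨α, h1, h2, h3, h4⟩ := exists_acc hκreg hκunc hΔunb γ hγ
    exact ⟨α, ⟨h2, h3, h4⟩, h1, h2⟩
  have hAacc := exists_acc hκreg hκunc hAunb
  have hAΔ : ∀ x, 0 < x → sSup (A ∩ Iio x) = x → sSup (Δ ∩ Iio x) = x := by
    intro x hx hsup
    have hne : (A ∩ Iio x).Nonempty := nonempty_of_sSup_pos hsup hx
    obtain ⟨γ0, hγ0⟩ := hne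
    have hne2 : (Δ ∩ Iio x).Nonempty := by
      obtain ⟨y, hy⟩ := nonempty_of_sSup_pos hγ0.1.2.2 hγ0.1.2.1
      exact ⟨y, hy.1, Set.mem_Iio.2 (lt_trans (Set.mem_Iio.1 hy.2) (Set.mem_Iio.1 hγ0.2))⟩
    apply le_antisymm
    · exact csSup_le hne2 fun z hz => hz.2.le
    · calc x = sSup (A ∩ Iio x) := hsup.symm
        _ ≤ sSup (Δ ∩ Iio x) := by
          refine csSup_le ⟨γ0, hγ0⟩ fun γ hγ => ?_
          have hneγ : (Δ ∩ Iio γ).Nonempty := nonempty_of_sSup_pos hγ.1.2.2 hγ.1.2.1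
          calc γ = sSup (Δ ∩ Iio γ) := hγ.1.2.2.symm
            _ ≤ sSup (Δ ∩ Iio x) :=
              csSup_le_csSup (bddAbove_of_subset_Iio (fun z (hz : z ∈ Δ ∩ Iio x) => hz.2))
                hneγ (fun z hz => ⟨hz.1,
                  Set.mem_Iio.2 (lt_trans (Set.mem_Iio.1 hz.2) (Set.mem_Iio.1 hγ.2))⟩)
  have hAclub : IsClubIn A κ.ord := by
    refine ⟨fun x hx => hx.1, ?_, ?_⟩
    · intro γ hγ
      obtain ⟨x, hx, hlt, _⟩ := hAunb γ hγ
      exact ⟨x, hx, hlt.le⟩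
    · intro a ha hapos hsup
      exact ⟨ha, hapos, hAΔ a hapos hsup⟩
  have hAne : A.Nonempty := by
    obtain ⟨x, hx, _⟩ := hAunb 0 hκord.pos
    exact ⟨x, hx⟩
  set m := sInf A with hmdef
  have hmA : m ∈ A := csInf_mem hAne
  have hmκ : m < κ.ord := hmA.1
  have hxi : ∀ j, j < m → ∃ x, x ∈ A ∧ x ∈ S j := by
    intro j hj
    obtain ⟨x, hx⟩ := hS j (hj.trans hmκ) A hAclub
    exact ⟨x, hx.2, hx.1⟩
  choose xi hxiA hxiS using hxi
  have hEn := myEnum_spec hκreg hAunb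
  have hbs3 : Ordinal.bsup m (fun j hj => xi j hj + 1) < κ.ord := by
    apply Ordinal.bsup_lt_ord
    · rw [hκreg.cof_eq]
      exact Cardinal.lt_ord.1 hmκ
    · intro j hj
      exact add_one_lt_of_limit hκord (hxiA j hj).1
  set bound2 : Ordinal.{0} :=
    if (Order.succ m.card).ord < κ.ord then (Order.succ m.card).ord else 0 with hb2def
  have hbound2 : bound2 < κ.ord := by
    rw [hb2def]
    split_ifs with hh
    · exact hh
    · exact hκord.pos
  set γ0 : Ordinal.{0} := ((myEnum A m) ⊔ (Ordinal.bsup m fun j hj => xi j hj + 1)) ⊔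
      ((m + 1) ⊔ bound2) with hγ0def
  have hγ0κ : γ0 < κ.ord := by
    apply max_lt (max_lt (hEn m hmκ).2.1 hbs3)
      (max_lt (add_one_lt_of_limit hκord hmκ) hbound2)
  obtain ⟨α, hγα, hακ, hαpos, hαsup⟩ := hAacc γ0 hγ0κ
  have hDsup : sSup (Δ ∩ Iio α) = α := hAΔ α hαpos hαsup
  have hβκ2 : b α < κ.ord := hblt α hακ
  have hcovα : Δ ∩ Iio α ⊆ C (b α) := hcov α hακ
  obtain ⟨hCbsub, hCbcl, _⟩ := hCseq (b α) hβκ2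
  have hΔne : (Δ ∩ Iio α).Nonempty := nonempty_of_sSup_pos hDsup hαpos
  have hαb : α ≤ b α := by
    calc α = sSup (Δ ∩ Iio α) := hDsup.symm
      _ ≤ b α := csSup_le hΔne fun x hx => (Set.mem_Iio.1 (hCbsub (hcovα hx))).le
  have hAsub : ∀ γ, γ ∈ A → γ < α → γ ∈ C (b α) := by
    intro γ hγA hγα2
    have hγb : γ < b α := lt_of_lt_of_le hγα2 hαb
    have hne : (Δ ∩ Iio γ).Nonempty := nonempty_of_sSup_pos hγA.2.2 hγA.2.1
    apply hCbcl γ hγb hγA.2.1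
    have hne2 : (C (b α) ∩ Iio γ).Nonempty := by
      obtain ⟨y, hy⟩ := hne
      exact ⟨y, hcovα ⟨hy.1, hy.2.trans hγα2⟩, hy.2⟩
    apply le_antisymm
    · exact csSup_le hne2 fun x hx => hx.2.le
    · calc γ = sSup (Δ ∩ Iio γ) := hγA.2.2.symm
        _ ≤ sSup (C (b α) ∩ Iio γ) :=
          csSup_le_csSup (bddAbove_of_subset_Iio (fun x (hx : x ∈ C (b α) ∩ Iio γ) => hx.2))
            hne (fun x hx => ⟨hcovα ⟨hx.1, hx.2.trans hγα2⟩, hx.2⟩)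
  have hm1γ0 : m + 1 ≤ γ0 := (le_max_left _ _).trans (le_max_right _ _)
  have hmα : m < α := lt_of_lt_of_le (lt_add_one_self m) (hm1γ0.trans hγα.le)
  have hmC : m ∈ C (b α) := hAsub m hmA hmα
  by_cases hblim : Order.IsSuccLimit (b α)
  · have hCeq : C (b α) =
        (if ∃ μ : Cardinal.{0}, μ.ord = b α ∧ IsWInaccessible μ then DD (b α)
         else if (b α).cof.ord = b α then Ico ((NU (b α))).ord (b α)
         else EE (b α)) := by
      simp only [hCdef]
      rw [if_pos ⟨hβκ2, hblim⟩]
    by_cases h4 : ∃ μ : Cardinal.{0}, μ.ord = b α ∧ IsWInaccessible μ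
    · -- weakly inaccessible case: contradiction via the chosen stationary point
      obtain ⟨_, _, _, _, hprop⟩ := hIDD (b α) ⟨hβκ2, hblim, h4⟩
      have hmC' : m ∈ DD (b α) := by rwa [hCeq, if_pos h4] at hmC
      have him : I (b α) < m := (hprop m hmC').1
      have hxiα : xi (I (b α)) him < α := by
        have h1 : xi (I (b α)) him + 1 ≤ Ordinal.bsup m fun j hj => xi j hj + 1 :=
          Ordinal.le_bsup _ _ him
        have h2 : (Ordinal.bsup m fun j hj => xi j hj + 1) ≤ γ0 :=
          (le_max_right _ _).trans (le_max_left _ _)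
        exact lt_of_lt_of_le (lt_add_one_self _) (h1.trans (h2.trans hγα.le))
      have hmem : xi (I (b α)) him ∈ DD (b α) := by
        have := hAsub _ (hxiA _ him) hxiα
        rwa [hCeq, if_pos h4] at this
      exact absurd (hxiS _ him) (hprop _ hmem).2
    · by_cases h5 : (b α).cof.ord = b α
      · -- successor cardinal case
        have hmC' : m ∈ Ico ((NU (b α))).ord (b α) := by
          rwa [hCeq, if_neg h4, if_pos h5] at hmC
        have hν := hNU (b α) ⟨hβκ2, hblim, h5, h4⟩
        have h6 : NU (b α) ≤ m.card := by
          calc NU (b α) = ((NU (b α)).ord).card := (Cardinal.card_ord _).symm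
            _ ≤ m.card := Ordinal.card_le_card hmC'.1
        have h7 : b α ≤ (Order.succ m.card).ord := by
          calc b α = (Order.succ (NU (b α))).ord := hν.symm
            _ ≤ (Order.succ m.card).ord := Cardinal.ord_le_ord.2 (Order.succ_le_succ h6)
        by_cases h8 : (Order.succ m.card).ord < κ.ord
        · have hb2 : bound2 = (Order.succ m.card).ord := by rw [hb2def, if_pos h8]
          have h9 : (Order.succ m.card).ord < α := by
            rw [← hb2]
            exact lt_of_le_of_lt ((le_max_right _ _).trans (le_max_right _ _)) hγα
          exact absurd (hαb.trans h7) (not_le.2 h9)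
        · have hκle : κ ≤ Order.succ m.card := Cardinal.ord_le_ord.1 (not_lt.1 h8)
          have hcard : (b α).card < κ := Cardinal.lt_ord.1 hβκ2
          have h9 : (b α).card ≤ m.card := Order.lt_succ_iff.1 (hcard.trans_le hκle)
          have h10 : (b α).card = Order.succ (NU (b α)) := by
            conv_lhs => rw [← hν]
            rw [Cardinal.card_ord]
          have h11 : b α ≤ m := by
            calc b α = ((b α).card).ord := by rw [h10, hν]
              _ ≤ (m.card).ord := Cardinal.ord_le_ord.2 h9
              _ ≤ m := Cardinal.ord_card_le m
          exact absurd (hαb.trans h11) (not_le.2 hmα)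
      · -- singular case
        have hsing : (b α).cof.ord < b α := lt_of_le_of_ne (Ordinal.ord_cof_le _) h5
        obtain ⟨_, _, _, hgt, hqmono, hqlt⟩ := hEQ (b α) ⟨hblim, hsing⟩
        have hmC' : m ∈ EE (b α) := by rwa [hCeq, if_neg h4, if_neg h5] at hmC
        have hξm : (b α).cof.ord < m := hgt m hmC'
        have hEmem : ∀ t, t ≤ m → myEnum A t ∈ EE (b α) := by
          intro t ht
          have h1 := hEn t (lt_of_le_of_lt ht hmκ)
          have h2 : myEnum A t ≤ myEnum A m := by
            rcases eq_or_lt_of_le ht with rfl | hlt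
            · exact le_rfl
            · exact ((hEn m hmκ).2.2 t hlt).le
          have h3 : myEnum A t < α :=
            lt_of_le_of_lt h2 (lt_of_le_of_lt ((le_max_left _ _).trans (le_max_left _ _)) hγα)
          have := hAsub _ h1.1 h3
          rwa [hCeq, if_neg h4, if_neg h5] at this
        have hGsm : StrictMonoOn (fun t => QQ (b α) (myEnum A t)) (Iic m) := by
          intro t ht t' ht' htt
          exact hqmono (hEmem t ht) (hEmem t' ht')
            ((hEn t' (lt_of_le_of_lt ht' hmκ)).2.2 t htt)
        have h1 := le_self_of_strictMonoOn hGsm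
        have h2 : QQ (b α) (myEnum A m) < (b α).cof.ord := hqlt _ (hEmem m le_rfl)
        exact absurd h1 (not_le.2 (h2.trans hξm))
  · -- b α is not a limit: C (b α) is empty or a singleton
    have hno : ¬(b α < κ.ord ∧ Order.IsSuccLimit (b α)) := fun hh => hblim hh.2
    have hCeq0 : C (b α) = if hσ : ∃ γ, b α = γ + 1 then {hσ.choose} else ∅ := by
      simp only [hCdef]
      rw [if_neg hno]
    by_cases hσ : ∃ γ, b α = γ + 1
    · have hCeq : C (b α) = {hσ.choose} := by rw [hCeq0, dif_pos hσ]
      -- find a second element of A below α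
      have hδ : ∃ δ ∈ A, δ < α ∧ m < δ := by
        by_contra hcδ
        push_neg at hcδ
        have hub : sSup (A ∩ Iio α) ≤ m := by
          apply csSup_le (nonempty_of_sSup_pos hαsup hαpos)
          intro x hx
          by_contra hxm
          push_neg at hxm
          exact absurd hxm (not_lt.2 (hcδ x hx.1 hx.2))
        rw [hαsup] at hub
        exact absurd (lt_of_lt_of_le (lt_add_one_self m) (hm1γ0.trans hγα.le)) (not_lt.2 hub)
      obtain ⟨δ, hδA, hδα, hmδ⟩ := hδ
      have h1 : m ∈ ({hσ.choose} : Set Ordinal.{0}) := by rwa [hCeq] at hmC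
      have h2 : δ ∈ ({hσ.choose} : Set Ordinal.{0}) := by
        have := hAsub δ hδA hδα
        rwa [hCeq] at this
      rw [mem_singleton_iff] at h1 h2
      rw [← h2] at h1
      exact absurd h1 hmδ.ne
    · have hCeq : C (b α) = (∅ : Set Ordinal.{0}) := by rw [hCeq0, dif_neg hσ]
      rw [hCeq] at hmC
      exact hmC


end CSeq
end
end

section
/- Let λ be an uncountable cardinal, let κ := λ⁺, and let δ be an uncountable cardinal. If there exists a δ-complete uniform ultrafilter over κ, then there exists a δ-complete uniform weakly normal ultrafilter over acc(κ), the set of nonzero limit ordinals below κ. -/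
noncomputable section

open Set

namespace CSeq

theorem statement7
    (lam : Cardinal.{0}) (hlam : Cardinal.aleph0 < lam)
    (δ : Cardinal.{0}) (hδ : Cardinal.aleph0 < δ)
    (U : Set (Set Ordinal.{0}))
    (hU : IsUltrafilterOn (Iio (Order.succ lam).ord) U)
    (hUcomplete : IsComplete δ (Iio (Order.succ lam).ord) U)
    (hUuniform : IsUniform (Iio (Order.succ lam).ord) U) :
    ∃ D : Set (Set Ordinal.{0}),
      IsUltrafilterOn (accOrd (Order.succ lam).ord) D ∧
      IsComplete δ (accOrd (Order.succ lam).ord) D ∧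
      IsUniform (accOrd (Order.succ lam).ord) D ∧
      IsWeaklyNormal (Order.succ lam).ord (accOrd (Order.succ lam).ord) D := by
  classical
  set μ : Cardinal.{0} := Order.succ lam with hμdef
  set κ : Ordinal.{0} := μ.ord with hκdef
  have hμinf : Cardinal.aleph0 ≤ μ := le_of_lt (lt_of_lt_of_le hlam (Order.le_succ lam))
  have hμreg : μ.IsRegular := Cardinal.isRegular_succ hlam.le
  have hκlim : Order.IsSuccLimit κ := Cardinal.isSuccLimit_ord hμinf
  have hκ0 : (0:Ordinal) < κ := hκlim.pos
  have hlt1 : ∀ x : Ordinal.{0}, x < x + 1 := fun x => by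
    rw [Ordinal.add_one_eq_succ]; exact Order.lt_succ x
  have hsucclt : ∀ x : Ordinal.{0}, x < κ → x + 1 < κ := fun x hx => by
    rw [Ordinal.add_one_eq_succ]; exact hκlim.succ_lt hx
  have hmkX : Cardinal.mk (Iio κ) = Cardinal.lift.{1} μ := by
    rw [Ordinal.mk_Iio_ordinal, Cardinal.card_ord]
  have hne : ∀ A ∈ U, A.Nonempty := by
    intro A hA
    rcases A.eq_empty_or_nonempty with h | h
    · exact absurd (h ▸ hA) hU.empty_notMem
    · exact h
  have hsubX : ∀ p : Ordinal.{0} → Prop, {β | β < κ ∧ p β} ⊆ Iio κ := fun p β hβ => hβ.1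
  have hdiff : ∀ p : Ordinal.{0} → Prop,
      Iio κ \ {β | β < κ ∧ p β} = {β | β < κ ∧ ¬ p β} := by
    intro p
    ext β
    simp only [Set.mem_diff, Set.mem_Iio, Set.mem_setOf_eq, not_and]
    exact ⟨fun ⟨h1, h2⟩ => ⟨h1, h2 h1⟩, fun ⟨h1, h2⟩ => ⟨h1, fun _ => h2⟩⟩
  have hUlarge : ∀ A ⊆ Iio κ,
      Cardinal.mk (Iio κ \ A : Set Ordinal.{0}) < Cardinal.lift.{1} μ → A ∈ U := by
    intro A hA hsmall
    rcases hU.mem_or_compl_mem A hA with h | h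
    · exact h
    · exact absurd (hUuniform _ h) (by rw [hmkX]; exact ne_of_lt hsmall)
  have hsmallbdd : ∀ γ, γ < κ →
      Cardinal.mk ({β | β < κ ∧ ¬ γ < β} : Set Ordinal.{0}) < Cardinal.lift.{1} μ := by
    intro γ hγ
    have hsub : {β | β < κ ∧ ¬ γ < β} ⊆ Iio (γ+1) := fun β hβ =>
      lt_of_le_of_lt (not_lt.mp hβ.2) (hlt1 γ)
    calc Cardinal.mk ({β | β < κ ∧ ¬ γ < β} : Set Ordinal.{0})
        ≤ Cardinal.mk (Iio (γ+1)) := Cardinal.mk_le_mk_of_subset hsub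
      _ = Cardinal.lift.{1} (γ+1).card := Ordinal.mk_Iio_ordinal _
      _ < Cardinal.lift.{1} μ :=
          Cardinal.lift_lt.mpr (Cardinal.lt_ord.mp (hsucclt γ hγ))
  -- the class of U-unbounded functions into κ
  set P : (Ordinal.{0} → Ordinal.{0}) → Prop :=
    fun f => (∀ β, f β < κ) ∧ ∀ γ, γ < κ → {β | β < κ ∧ γ < f β} ∈ U with hPdef
  have hgen : ∀ (f : Ordinal.{0} → Ordinal.{0}) (γ : Ordinal.{0}), γ < κ →
      ({β | β < κ ∧ γ < f β} ∉ U) → {β | β < κ ∧ f β ≤ γ} ∈ U := by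
    intro f γ hγ h
    rcases hU.mem_or_compl_mem _ (hsubX fun β => γ < f β) with h' | h'
    · exact absurd h' h
    · rw [hdiff] at h'
      simpa only [not_lt] using h'
  have hP0 : P (fun β => if β < κ then β else 0) := by
    constructor
    · intro β; dsimp only; split
      · assumption
      · exact hκ0
    · intro γ hγ
      have heq : {β | β < κ ∧ γ < (if β < κ then β else 0)} = {β | β < κ ∧ γ < β} := by
        ext β
        constructor
        · rintro ⟨h1, h2⟩; rw [if_pos h1] at h2; exact ⟨h1, h2⟩
        · rintro ⟨h1, h2⟩; exact ⟨h1, by rwa [if_pos h1]⟩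
      rw [heq]
      apply hUlarge _ (hsubX _)
      rw [hdiff]
      exact hsmallbdd γ hγ
  -- existence of a minimal unbounded function
  have hex : ∃ f, P f ∧ ∀ g, P g → {β | β < κ ∧ g β < f β} ∉ U := by
    by_contra hcon
    push_neg at hcon
    have step : ∀ p : {f : Ordinal.{0} → Ordinal.{0} // P f},
        ∃ q : {f : Ordinal.{0} → Ordinal.{0} // P f},
          {β | β < κ ∧ q.1 β < p.1 β} ∈ U := by
      intro p
      obtain ⟨g, hg, hgU⟩ := hcon p.1 p.2
      exact ⟨⟨g, hg⟩, hgU⟩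
    choose stepf hstep using step
    let seq : ℕ → {f : Ordinal.{0} → Ordinal.{0} // P f} := fun n =>
      Nat.rec ⟨_, hP0⟩ (fun _ p => stepf p) n
    have hseq : ∀ n, {β | β < κ ∧ (seq (n+1)).1 β < (seq n).1 β} ∈ U := fun n => hstep (seq n)
    set s : Set (Set Ordinal.{0}) :=
      Set.range (fun n : ℕ => {β | β < κ ∧ (seq (n+1)).1 β < (seq n).1 β}) with hsdef
    have hsU : s ⊆ U := by rintro _ ⟨n, rfl⟩; exact hseq n
    have hslt : MkLt s δ := by
      show Cardinal.mk s < Cardinal.lift.{1} δ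
      have h1 : Cardinal.mk s ≤ Cardinal.aleph0 := by
        have := Cardinal.mk_range_le_lift
          (f := fun n : ℕ => {β | β < κ ∧ (seq (n+1)).1 β < (seq n).1 β})
        simpa [hsdef] using this
      exact lt_of_le_of_lt h1
        (by rw [← Cardinal.lift_aleph0.{1,0}]; exact Cardinal.lift_lt.mpr hδ)
    obtain ⟨β, hβ⟩ := hne _ (hUcomplete s hsU hslt)
    have hβall : ∀ n, (seq (n+1)).1 β < (seq n).1 β := fun n =>
      (hβ.2 _ ⟨n, rfl⟩).2
    obtain ⟨m, ⟨n, hn⟩, hmin⟩ := Ordinal.lt_wf.has_min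
      (Set.range fun n => (seq n).1 β) ⟨_, Set.mem_range_self 0⟩
    exact hmin _ (Set.mem_range_self (n+1)) (hn ▸ hβall n)
  obtain ⟨f, hPf, hfmin⟩ := hex
  -- f is a.e. a limit ordinal
  have hL : {β | β < κ ∧ Order.IsSuccLimit (f β)} ∈ U := by
    by_contra hnot
    rcases hU.mem_or_compl_mem _ (hsubX fun β => Order.IsSuccLimit (f β)) with h | h
    · exact hnot h
    rw [hdiff] at h
    have hpos : {β | β < κ ∧ (0:Ordinal) < f β} ∈ U := hPf.2 0 hκ0
    have hE' : {β | β < κ ∧ ¬ Order.IsSuccLimit (f β)} ∩ {β | β < κ ∧ (0:Ordinal) < f β} ∈ U :=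
      hU.inter_mem _ h _ hpos
    have hsucc : ∀ β ∈ ({β | β < κ ∧ ¬ Order.IsSuccLimit (f β)} ∩ {β | β < κ ∧ (0:Ordinal) < f β}),
        ∃ a, f β = Order.succ a := by
      rintro β ⟨⟨-, h1⟩, ⟨-, h2⟩⟩
      rcases Ordinal.zero_or_succ_or_isSuccLimit (f β) with h3 | h3 | h3
      · exact absurd h3 (ne_of_gt h2)
      · obtain ⟨a, ha⟩ := h3; exact ⟨a, ha.symm⟩
      · exact absurd h3 h1
    have hPf' : P (fun β => (f β).pred) := by
      constructor
      · exact fun β => lt_of_le_of_lt (Ordinal.pred_le_self _) (hPf.1 β)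
      · intro γ hγ
        have h1 : {β | β < κ ∧ γ + 1 < f β} ∈ U := hPf.2 (γ+1) (hsucclt γ hγ)
        apply hU.mem_of_superset _ (hU.inter_mem _ hE' _ h1) _ (hsubX _)
        rintro β ⟨hβE', ⟨hβκ, hβγ⟩⟩
        obtain ⟨a, ha⟩ := hsucc β hβE'
        refine ⟨hβκ, ?_⟩
        show γ < (f β).pred
        rw [ha, Ordinal.pred_succ]
        rw [ha, Ordinal.add_one_eq_succ] at hβγ
        exact Order.succ_lt_succ_iff.mp hβγ
    apply hfmin _ hPf'
    apply hU.mem_of_superset _ hE' _ (hsubX _)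
    intro β hβE'
    refine ⟨hβE'.1.1, ?_⟩
    obtain ⟨a, ha⟩ := hsucc β hβE'
    show (f β).pred < f β
    rw [ha, Ordinal.pred_succ]
    exact Order.lt_succ a
  -- the pushforward
  set Φ : Set Ordinal.{0} → Set Ordinal.{0} := fun A => {β | β < κ ∧ f β ∈ A} with hΦdef
  have hΦsub : ∀ A, Φ A ⊆ Iio κ := fun A β hβ => hβ.1
  have hΦmono : ∀ {A B : Set Ordinal.{0}}, A ⊆ B → Φ A ⊆ Φ B :=
    fun hAB β hβ => ⟨hβ.1, hAB hβ.2⟩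
  have hΦacc : Φ (accOrd κ) ∈ U := by
    apply hU.mem_of_superset _ hL _ (hΦsub _)
    exact fun β hβ => ⟨hβ.1, hPf.1 β, hβ.2⟩
  set D : Set (Set Ordinal.{0}) := {A | A ⊆ accOrd κ ∧ Φ A ∈ U} with hDdef
  have hDsuper : ∀ A ∈ D, ∀ B, B ⊆ accOrd κ → A ⊆ B → B ∈ D := by
    intro A hA B hBsub hAB
    exact ⟨hBsub, hU.mem_of_superset _ hA.2 _ (hΦsub _) (hΦmono hAB)⟩
  refine ⟨D, ?_, ?_, ?_, ?_⟩
  · constructor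
    · exact fun A hA => hA.1
    · exact ⟨subset_rfl, hΦacc⟩
    · rintro ⟨-, hemp⟩
      have heq : Φ (∅ : Set Ordinal.{0}) = ∅ := by
        ext β; simp [hΦdef]
      exact hU.empty_notMem (heq ▸ hemp)
    · exact hDsuper
    · intro A hA B hB
      refine ⟨fun β hβ => hA.1 hβ.1, ?_⟩
      have heq : Φ (A ∩ B) = Φ A ∩ Φ B := by
        ext β
        simp only [hΦdef, Set.mem_setOf_eq, Set.mem_inter_iff]
        tauto
      rw [heq]
      exact hU.inter_mem _ hA.2 _ hB.2
    · intro A hAsub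
      rcases hU.mem_or_compl_mem (Φ A) (hΦsub A) with h | h
      · exact Or.inl ⟨hAsub, h⟩
      · refine Or.inr ⟨diff_subset, ?_⟩
        apply hU.mem_of_superset _ (hU.inter_mem _ hΦacc _ h) _ (hΦsub _)
        rintro β ⟨⟨h1, h2⟩, ⟨-, h4⟩⟩
        exact ⟨h1, h2, fun hmem => h4 ⟨h1, hmem⟩⟩
  · intro s hsD hslt
    refine ⟨inter_subset_left, ?_⟩
    set t : Set (Set Ordinal.{0}) := insert (Φ (accOrd κ)) (Φ '' s) with htdef
    have htU : t ⊆ U := by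
      intro B hB
      rcases Set.mem_insert_iff.mp hB with rfl | hB'
      · exact hΦacc
      · obtain ⟨A, hA, rfl⟩ := hB'
        exact (hsD hA).2
    have htlt : MkLt t δ := by
      show Cardinal.mk t < Cardinal.lift.{1} δ
      have h1 : Cardinal.mk t ≤ Cardinal.mk (Φ '' s) + 1 := Cardinal.mk_insert_le
      have h2 : Cardinal.mk (Φ '' s) + 1 ≤ Cardinal.mk s + 1 :=
        by gcongr; exact Cardinal.mk_image_le
      have h3 : Cardinal.mk s + 1 < Cardinal.lift.{1} δ := by
        rcases lt_or_ge (Cardinal.mk s) Cardinal.aleph0 with hc | hc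
        · exact lt_trans (Cardinal.add_lt_aleph0 hc Cardinal.one_lt_aleph0)
            (by rw [← Cardinal.lift_aleph0.{1,0}]; exact Cardinal.lift_lt.mpr hδ)
        · rw [Cardinal.add_one_eq hc]; exact hslt
      exact lt_of_le_of_lt (le_trans h1 h2) h3
    have hmem := hUcomplete t htU htlt
    have heq : Iio κ ∩ ⋂₀ t = Φ (accOrd κ ∩ ⋂₀ s) := by
      ext β
      constructor
      · rintro ⟨hβκ, hall⟩
        have hacc := hall _ (Set.mem_insert _ _)
        refine ⟨hβκ, hacc.2, Set.mem_sInter.mpr fun A hA => ?_⟩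
        exact (hall _ (Set.mem_insert_of_mem _ (Set.mem_image_of_mem Φ hA))).2
      · rintro ⟨hβκ, hfacc, hfall⟩
        refine ⟨hβκ, fun B hB => ?_⟩
        rcases Set.mem_insert_iff.mp hB with rfl | hB'
        · exact ⟨hβκ, hfacc⟩
        · obtain ⟨A, hA, rfl⟩ := hB'
          exact ⟨hβκ, Set.mem_sInter.mp hfall A hA⟩
    rwa [heq] at hmem
  · intro A hA
    have hAsub : A ⊆ accOrd κ := hA.1
    have hAIio : A ⊆ Iio κ := fun α hα => (hAsub hα).1
    have hunbdd : ∀ γ, γ < κ → ∃ α ∈ A, γ < α := by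
      intro γ hγ
      obtain ⟨β, ⟨⟨-, h2⟩, ⟨-, h4⟩⟩⟩ := hne _ (hU.inter_mem _ hA.2 _ (hPf.2 γ hγ))
      exact ⟨f β, h2, h4⟩
    have hlow : Cardinal.lift.{1} μ ≤ Cardinal.mk A := by
      by_contra hcon
      push_neg at hcon
      obtain ⟨c, hcμ, hc⟩ := Cardinal.lt_lift_iff.mp hcon
      have he : Nonempty (Quotient.out c ≃ A) := by
        apply Cardinal.lift_mk_eq'.mp
        rw [Cardinal.mk_out]
        simp [hc]
      obtain ⟨e⟩ := he
      set F : Quotient.out c → Ordinal.{0} := fun i => ((e i : Ordinal.{0})) with hFdef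
      have hsup : iSup F < κ := by
        apply Ordinal.iSup_lt_ord
        · rw [Cardinal.mk_out]
          rwa [hκdef, hμreg.cof_eq]
        · exact fun i => hAIio (e i).2
      obtain ⟨α, hαA, hαgt⟩ := hunbdd _ hsup
      have hle : α ≤ iSup F := by
        have := Ordinal.le_iSup F (e.symm ⟨α, hαA⟩)
        simpa [hFdef] using this
      exact absurd hαgt (not_lt.mpr hle)
    have haccupp : Cardinal.mk (accOrd κ) ≤ Cardinal.lift.{1} μ := by
      calc Cardinal.mk (accOrd κ) ≤ Cardinal.mk (Iio κ) :=
            Cardinal.mk_le_mk_of_subset (fun β hβ => hβ.1)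
        _ = Cardinal.lift.{1} μ := hmkX
    exact le_antisymm (Cardinal.mk_le_mk_of_subset hAsub)
      (le_trans haccupp hlow)
  · intro X' hX' g hg
    set h : Ordinal.{0} → Ordinal.{0} := fun β => if f β ∈ X' then g (f β) else 0 with hhdef
    have hhlt : ∀ β, h β < κ := by
      intro β
      show (if f β ∈ X' then g (f β) else 0) < κ
      split
      · exact lt_trans (hg _ ‹_›) (hPf.1 β)
      · exact hκ0
    have hnotP : ¬ ∀ γ, γ < κ → {β | β < κ ∧ γ < h β} ∈ U := by
      intro hP'
      apply hfmin h ⟨hhlt, hP'⟩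
      apply hU.mem_of_superset _ hX'.2 _ (hsubX _)
      rintro β ⟨h1, h2⟩
      refine ⟨h1, ?_⟩
      show (if f β ∈ X' then g (f β) else 0) < f β
      rw [if_pos h2]
      exact hg _ h2
    push_neg at hnotP
    obtain ⟨γ, hγκ, hγ⟩ := hnotP
    have hbd : {β | β < κ ∧ h β ≤ γ} ∈ U := hgen h γ hγκ hγ
    refine ⟨γ + 1, hsucclt γ hγκ, ?_, ?_⟩
    · intro β hβ
      exact hX'.1 hβ.1
    · apply hU.mem_of_superset _ (hU.inter_mem _ hX'.2 _ hbd) _ (hsubX _)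
      rintro β ⟨⟨h1, h2⟩, ⟨-, h3⟩⟩
      refine ⟨h1, h2, ?_⟩
      have heqh : h β = g (f β) := by
        show (if f β ∈ X' then g (f β) else 0) = g (f β)
        rw [if_pos h2]
      rw [heqh] at h3
      exact lt_of_le_of_lt h3 (hlt1 γ)

end CSeq
end
end

section
/- Let λ be a singular (or more generally uncountable) cardinal and suppose δ < λ is an uncountable cardinal such that there exists a uniform δ-complete weakly normal ultrafilter D over acc(λ⁺). Then for every C-sequence ⟨C_β : β < λ⁺⟩ over λ⁺ there exists A ∈ [λ⁺]^{λ⁺} such that for every B ∈ [A]^{<δ} there exists β < λ⁺ with B ⊆ C_β. -/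
noncomputable section

open Set

namespace CSeq

theorem statement8
    (lam : Cardinal.{0}) (hlam : Cardinal.aleph0 < lam)
    (δ : Cardinal.{0}) (hδ : Cardinal.aleph0 < δ) (hδlam : δ < lam)
    (D : Set (Set Ordinal.{0}))
    (hD : IsUltrafilterOn (accOrd (Order.succ lam).ord) D)
    (hDcomplete : IsComplete δ (accOrd (Order.succ lam).ord) D)
    (hDuniform : IsUniform (accOrd (Order.succ lam).ord) D)
    (hDweaklyNormal :
      IsWeaklyNormal (Order.succ lam).ord (accOrd (Order.succ lam).ord) D)
    (C : Ordinal.{0} → Set Ordinal.{0}) (hC : IsCSeq (Order.succ lam).ord C) :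
    ∃ A : Set Ordinal.{0}, A ⊆ Iio (Order.succ lam).ord ∧
      MkEq A (Order.succ lam) ∧
      ∀ B ⊆ A, MkLt B δ → ∃ β < (Order.succ lam).ord, B ⊆ C β := by
  classical
  have hμ : Cardinal.aleph0 < Order.succ lam := hlam.trans (Order.lt_succ lam)
  set κ : Ordinal.{0} := (Order.succ lam).ord with hκdef
  have hreg : (Order.succ lam).IsRegular := Cardinal.isRegular_succ hlam.le
  have hκlim : Order.IsSuccLimit κ := Cardinal.isSuccLimit_ord hμ.le
  have hcof : κ.cof = Order.succ lam := hreg.cof_eq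
  have hmkκ : Cardinal.mk (Iio κ) = Cardinal.lift.{1} (Order.succ lam) := by
    rw [hκdef, Ordinal.mk_Iio_ordinal, Cardinal.card_ord]
  have haccsub : accOrd κ ⊆ Iio κ := fun β hβ => hβ.1
  -- a strictly monotone map into the limit ordinals
  have hsm : StrictMono (fun x : Ordinal.{0} => Ordinal.omega0 * (x + 1)) := by
    intro a b h
    refine mul_lt_mul_of_pos_left ?_ Ordinal.omega0_pos
    rw [Ordinal.add_one_eq_succ, Ordinal.add_one_eq_succ]
    exact Order.succ_lt_succ h
  have hmem : ∀ x : Ordinal.{0}, x < κ → Ordinal.omega0 * (x + 1) ∈ accOrd κ := by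
    intro x hx
    refine ⟨?_, ?_⟩
    · rw [hκdef, Cardinal.lt_ord, Ordinal.card_mul, Ordinal.card_add,
        Ordinal.card_omega0, Ordinal.card_one]
      have hxc : x.card ≤ lam := Order.lt_succ_iff.1 (Cardinal.lt_ord.1 hx)
      calc Cardinal.aleph0 * (x.card + 1)
          ≤ lam * (lam + lam) :=
            mul_le_mul' hlam.le (add_le_add hxc (le_trans Cardinal.one_le_aleph0 hlam.le))
        _ = lam := by rw [Cardinal.add_eq_self hlam.le, Cardinal.mul_eq_self hlam.le]
        _ < Order.succ lam := Order.lt_succ lam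
    · rw [Ordinal.add_one_eq_succ, Ordinal.mul_succ]
      exact Ordinal.isSuccLimit_add _ Ordinal.isSuccLimit_omega0
  have hmkaccge : Cardinal.lift.{1} (Order.succ lam) ≤ Cardinal.mk (accOrd κ) := by
    rw [← hmkκ]
    exact Cardinal.mk_le_of_injective
      (f := fun x : (Iio κ) => (⟨_, hmem x.1 x.2⟩ : (accOrd κ)))
      (fun a b h => Subtype.ext (hsm.injective (congrArg Subtype.val h)))
  -- bounded sets are not in D
  have hboundednotD : ∀ γ, γ < κ → ∀ X, X ⊆ Iio (γ + 1) → X ∉ D := by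
    intro γ hγ X hXsub hXD
    have hsγ : γ + 1 < κ := by
      rw [Ordinal.add_one_eq_succ]; exact hκlim.succ_lt hγ
    have h1 : Cardinal.mk X = Cardinal.mk (accOrd κ) := hDuniform X hXD
    have h2 : Cardinal.mk X ≤ Cardinal.lift.{1} lam := by
      calc Cardinal.mk X ≤ Cardinal.mk (Iio (γ + 1)) := Cardinal.mk_le_mk_of_subset hXsub
        _ = Cardinal.lift.{1} (γ + 1).card := Ordinal.mk_Iio_ordinal _
        _ ≤ Cardinal.lift.{1} lam :=
            Cardinal.lift_le.2 (Order.lt_succ_iff.1 (Cardinal.lt_ord.1 hsγ))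
    rw [h1] at h2
    exact absurd (le_trans hmkaccge h2)
      (not_le.2 (Cardinal.lift_lt.2 (Order.lt_succ lam)))
  -- members of D are nonempty
  have hne : ∀ X ∈ D, X.Nonempty := by
    intro X hX
    rcases X.eq_empty_or_nonempty with rfl | h
    · exact absurd hX hD.empty_notMem
    · exact h
  -- tails are in D
  have htail : ∀ γ, γ < κ → {β | β ∈ accOrd κ ∧ γ < β} ∈ D := by
    intro γ hγ
    have hsub : {β | β ∈ accOrd κ ∧ γ < β} ⊆ accOrd κ := fun β hβ => hβ.1
    rcases hD.mem_or_compl_mem _ hsub with h | h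
    · exact h
    · exfalso
      refine hboundednotD γ hγ _ ?_ h
      intro β hβ
      obtain ⟨hβacc, hβnot⟩ := hβ
      have hle : β ≤ γ := not_lt.1 (fun hc => hβnot ⟨hβacc, hc⟩)
      have : γ < γ + 1 := by rw [Ordinal.add_one_eq_succ]; exact Order.lt_succ γ
      exact lt_of_le_of_lt hle this
  -- each C β is unbounded in β for β ∈ accOrd κ
  have hCunb : ∀ β ∈ accOrd κ, ∀ ξ, ξ < β → ∃ x, x ∈ C β ∧ ξ < x := by
    intro β hβ ξ hξ
    obtain ⟨hβκ, hβlim⟩ := hβ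
    obtain ⟨hsub, hcl, hsup⟩ := hC β hβκ
    by_contra hcon
    push_neg at hcon
    have h1 : sSup (C β) ≤ ξ := csSup_le' hcon
    rw [hsup, hβlim.sSup_Iio] at h1
    exact absurd hξ (not_lt.2 h1)
  -- the stepping lemma
  have key : ∀ ξ, ξ < κ →
      ∃ γ, ξ < γ ∧ γ < κ ∧ {β | β ∈ accOrd κ ∧ ∃ x, x ∈ C β ∧ ξ < x ∧ x < γ} ∈ D := by
    intro ξ hξ
    have hX' : {β | β ∈ accOrd κ ∧ ξ < β} ∈ D := htail ξ hξ
    set g : Ordinal.{0} → Ordinal.{0} := fun β => sInf {x | x ∈ C β ∧ ξ < x} with hgdef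
    have hg : ∀ β ∈ {β | β ∈ accOrd κ ∧ ξ < β}, (g β ∈ C β ∧ ξ < g β) ∧ g β < β := by
      intro β hβ
      have hne' : {x | x ∈ C β ∧ ξ < x}.Nonempty := hCunb β hβ.1 ξ hβ.2
      have hmem' := csInf_mem hne'
      exact ⟨hmem', (hC β hβ.1.1).1 hmem'.1⟩
    obtain ⟨γ, hγκ, hγD⟩ := hDweaklyNormal _ hX' g (fun β hβ => (hg β hβ).2)
    have hξ1 : ξ < ξ + 1 := by rw [Ordinal.add_one_eq_succ]; exact Order.lt_succ ξ
    refine ⟨max γ (ξ + 1), lt_of_lt_of_le hξ1 (le_max_right _ _),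
      max_lt hγκ (by rw [Ordinal.add_one_eq_succ]; exact hκlim.succ_lt hξ), ?_⟩
    refine hD.mem_of_superset _ hγD _ (fun β hβ => hβ.1) ?_
    intro β hβ
    obtain ⟨hβX', hβγ⟩ := hβ
    exact ⟨hβX'.1, g β, (hg β hβX').1.1, (hg β hβX').1.2,
      lt_of_lt_of_le hβγ (le_max_left _ _)⟩
  -- the set A
  set S : Ordinal.{0} → Set Ordinal.{0} := fun α => {β | β ∈ accOrd κ ∧ α ∈ C β} with hSdef
  set A : Set Ordinal.{0} := {α | α < κ ∧ S α ∈ D} with hAdef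
  have hAsub : A ⊆ Iio κ := fun α hα => hα.1
  -- covering property
  have hAcov : ∀ B ⊆ A, MkLt B δ → ∃ β, β < κ ∧ B ⊆ C β := by
    intro B hBA hBδ
    have hsub : S '' B ⊆ D := by rintro _ ⟨a, haB, rfl⟩; exact (hBA haB).2
    have hlt : MkLt (S '' B) δ := lt_of_le_of_lt Cardinal.mk_image_le hBδ
    have hX := hDcomplete (S '' B) hsub hlt
    obtain ⟨β, hβacc, hβint⟩ := hne _ hX
    refine ⟨β, hβacc.1, ?_⟩
    intro a haB
    exact (hβint (S a) (Set.mem_image_of_mem S haB)).2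
  -- A is unbounded in κ
  have hAunb : ∀ γ₀, γ₀ < κ → ∃ α, α ∈ A ∧ γ₀ < α := by
    intro γ₀ hγ₀
    set F : Ordinal.{0} → Ordinal.{0} :=
      fun ξ => if h : ξ < κ then (key ξ h).choose else 0 with hFdef
    have hF : ∀ ξ, ∀ h : ξ < κ, ξ < F ξ ∧ F ξ < κ ∧
        {β | β ∈ accOrd κ ∧ ∃ x, x ∈ C β ∧ ξ < x ∧ x < F ξ} ∈ D := by
      intro ξ h
      have he : F ξ = (key ξ h).choose := dif_pos h
      rw [he]
      exact (key ξ h).choose_spec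
    set f : ℕ → Ordinal.{0} := fun n => F^[n] (γ₀ + 1) with hfdef
    have hf0 : f 0 = γ₀ + 1 := rfl
    have hfs : ∀ n, f (n + 1) = F (f n) := fun n => Function.iterate_succ_apply' F n _
    have hγ₀1 : γ₀ + 1 < κ := by rw [Ordinal.add_one_eq_succ]; exact hκlim.succ_lt hγ₀
    have hflt : ∀ n, f n < κ := by
      intro n
      induction n with
      | zero => rw [hf0]; exact hγ₀1
      | succ n ih => rw [hfs]; exact (hF _ ih).2.1
    have hfmono : ∀ n, f n < f (n + 1) := fun n => by rw [hfs]; exact (hF _ (hflt n)).1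
    have hfD : ∀ n, {β | β ∈ accOrd κ ∧ ∃ x, x ∈ C β ∧ f n < x ∧ x < f (n + 1)} ∈ D := by
      intro n
      rw [hfs n]
      exact (hF _ (hflt n)).2.2
    have hbdd : BddAbove (Set.range f) := ⟨κ, by rintro _ ⟨n, rfl⟩; exact (hflt n).le⟩
    set α := ⨆ n, f n with hαdef
    have hfle : ∀ n, f n ≤ α := fun n => le_ciSup hbdd n
    have hακ : α < κ := by
      refine Ordinal.iSup_lt_ord ?_ hflt
      rw [hcof, Cardinal.mk_nat]
      exact hμ
    have hγ₀α : γ₀ < α := by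
      have h1 : γ₀ < γ₀ + 1 := by rw [Ordinal.add_one_eq_succ]; exact Order.lt_succ γ₀
      exact lt_of_lt_of_le h1 (hf0 ▸ hfle 0)
    have hαlim : Order.IsSuccLimit α := by
      rw [Ordinal.isSuccLimit_iff, Order.isSuccPrelimit_iff_succ_lt]
      constructor
      · exact ((zero_le (a := γ₀)).trans_lt hγ₀α).ne'
      · intro x hx
        obtain ⟨n, hn⟩ := (lt_ciSup_iff hbdd).1 hx
        exact lt_of_le_of_lt (Order.succ_le_of_lt hn)
          (lt_of_lt_of_le (hfmono n) (hfle (n + 1)))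
    set T : ℕ → Set Ordinal.{0} := fun n => Nat.casesOn n {β | β ∈ accOrd κ ∧ α < β}
      (fun m => {β | β ∈ accOrd κ ∧ ∃ x, x ∈ C β ∧ f m < x ∧ x < f (m + 1)}) with hTdef
    have hTD : ∀ n, T n ∈ D := by
      intro n
      cases n with
      | zero => exact htail α hακ
      | succ m => exact hfD m
    have hTsub : Set.range T ⊆ D := by rintro _ ⟨n, rfl⟩; exact hTD n
    have hTlt : MkLt (Set.range T) δ := by
      have h1 : Cardinal.lift.{0} (Cardinal.mk (Set.range T)) ≤
          Cardinal.lift.{1} (Cardinal.mk ℕ) := Cardinal.mk_range_le_lift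
      rw [Cardinal.lift_id', Cardinal.mk_nat] at h1
      exact lt_of_le_of_lt h1 (Cardinal.lift_lt.2 hδ)
    have hX := hDcomplete _ hTsub hTlt
    refine ⟨α, ⟨hακ, ?_⟩, hγ₀α⟩
    refine hD.mem_of_superset _ hX _ (fun β hβ => hβ.1) ?_
    intro β hβ
    obtain ⟨hβacc, hβint⟩ := hβ
    have hβT : ∀ n, β ∈ T n := fun n => hβint (T n) ⟨n, rfl⟩
    have hαβ : α < β := (hβT 0).2
    obtain ⟨hβκ, hβlim⟩ := hβacc
    obtain ⟨hsub', hcl', hsup'⟩ := hC β hβκ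
    refine ⟨⟨hβκ, hβlim⟩, ?_⟩
    refine hcl' α hαβ hαlim.pos ?_
    apply le_antisymm
    · exact csSup_le' (fun x hx => le_of_lt hx.2)
    · refine ciSup_le' ?_
      intro n
      obtain ⟨x, hxC, hx1, hx2⟩ := (hβT (n + 1)).2
      have hxα : x < α := lt_of_lt_of_le hx2 (hfle (n + 1))
      exact le_trans hx1.le
        (le_csSup ⟨α, fun y hy => le_of_lt hy.2⟩ ⟨hxC, hxα⟩)
  -- |A| = λ⁺
  have hmkA_le : Cardinal.mk A ≤ Cardinal.lift.{1} (Order.succ lam) := by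
    rw [← hmkκ]; exact Cardinal.mk_le_mk_of_subset hAsub
  have hmkA_ge : Cardinal.lift.{1} (Order.succ lam) ≤ Cardinal.mk A := by
    set e := (Ordinal.ToType.mk : Iio κ ≃o κ.ToType) with hedef
    set A' : Set κ.ToType := {b | ((e.symm b : Iio κ) : Ordinal.{0}) ∈ A} with hA'def
    have hA'unb : Set.Unbounded (· < ·) A' := by
      intro a
      obtain ⟨α, hαA, hα⟩ := hAunb ((e.symm a : Iio κ) : Ordinal.{0}) (e.symm a).2
      refine ⟨e ⟨α, hαA.1⟩, ?_, ?_⟩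
      · show ((e.symm (e ⟨α, hαA.1⟩) : Iio κ) : Ordinal.{0}) ∈ A
        rw [OrderIso.symm_apply_apply]
        exact hαA
      · intro hc
        have h2 : e.symm (e ⟨α, hαA.1⟩) < e.symm a := (OrderIso.lt_iff_lt _).2 hc
        rw [OrderIso.symm_apply_apply] at h2
        exact absurd (show α < ((e.symm a : Iio κ) : Ordinal.{0}) from h2) (not_lt.2 hα.le)
    have h1 : κ.cof ≤ Cardinal.mk A' := by
      have h2 := Order.cof_le (α := κ.ToType) (s := A')
        (fun a => by obtain ⟨b, hb, hb'⟩ := hA'unb a; exact ⟨b, hb, not_lt.1 hb'⟩)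
      rwa [Ordinal.cof_toType] at h2
    rw [hcof] at h1
    have h3 : Cardinal.lift.{1} (Cardinal.mk A') ≤ Cardinal.mk A := by
      have h4 : Cardinal.lift.{1} (Cardinal.mk A') ≤ Cardinal.lift.{0} (Cardinal.mk A) := by
        refine Cardinal.lift_mk_le'.2 ⟨⟨fun b => ⟨((e.symm b.1 : Iio κ) : Ordinal.{0}), b.2⟩, ?_⟩⟩
        intro b1 b2 hb
        apply Subtype.ext
        apply e.symm.injective
        apply Subtype.ext
        have hb2 := hb
        simp only [Subtype.mk.injEq] at hb2
        exact hb2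
      rwa [Cardinal.lift_id'] at h4
    exact le_trans (Cardinal.lift_le.2 h1) h3
  exact ⟨A, hAsub, le_antisymm hmkA_le hmkA_ge, fun B hBA hBδ => hAcov B hBA hBδ⟩

end CSeq
end
end
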